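/- arXiv:1809.02803 — 3 statements merged into one kernel-verified Lean document; each statement's English description precedes it below -/
import Mathlib

section
/- For every Schwartz function f : ℝ² → ℝ one has the anisotropic Agmon-type inequality ∫_{ℝ} ( sup_{x₁∈ℝ} |f(x₁,x₂)| )² dx₂ ≤ 2 ‖f‖_{L²(ℝ²)} ‖∂₁f‖_{L²(ℝ²)}; equivalently, ‖f‖_{L²_v(L^∞_h)} ≤ √2 ‖f‖_{L²}^{1/2} ‖∂₁f‖_{L²}^{1/2}. -/
open MeasureTheory Real

/-- The partial derivative `∂₁` on `ℝ²`. -/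
noncomputable def pd1 {E : Type*} [NormedAddCommGroup E] [NormedSpace ℝ E]
    (g : ℝ × ℝ → E) (x : ℝ × ℝ) : E := fderiv ℝ g x (1, 0)

/-- The partial derivative `∂₂` on `ℝ²`. -/
noncomputable def pd2 {E : Type*} [NormedAddCommGroup E] [NormedSpace ℝ E]
    (g : ℝ × ℝ → E) (x : ℝ × ℝ) : E := fderiv ℝ g x (0, 1)

/-- The Euclidean dot product on `ℝ²`. -/
def pdot (a b : ℝ × ℝ) : ℝ := a.1 * b.1 + a.2 * b.2

/-- The `L²(ℝ²)` norm of a vector field. -/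
noncomputable def L2v (g : ℝ × ℝ → ℝ × ℝ) : ℝ :=
  Real.sqrt (∫ x : ℝ × ℝ, pdot (g x) (g x))

/-- The `L²(ℝ²)` norm of a scalar function. -/
noncomputable def L2s (f : ℝ × ℝ → ℝ) : ℝ :=
  Real.sqrt (∫ x : ℝ × ℝ, (f x) ^ 2)

/-- The convection term `u·∇v = u¹∂₁v + u²∂₂v` for vector fields on `ℝ²`. -/
noncomputable def convV (u v : ℝ × ℝ → ℝ × ℝ) (x : ℝ × ℝ) : ℝ × ℝ :=
  (u x).1 • pd1 v x + (u x).2 • pd2 v x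

/-- Pointwise divergence-free: `∂₁u¹ + ∂₂u² = 0`. -/
def DivFree (u : ℝ × ℝ → ℝ × ℝ) : Prop :=
  ∀ x, pd1 (fun y => (u y).1) x + pd2 (fun y => (u y).2) x = 0

/-- Anisotropic Agmon-type inequality:
`∫_ℝ (sup_{x₁} |f(x₁,x₂)|)² dx₂ ≤ 2 ‖f‖_{L²} ‖∂₁f‖_{L²}` for Schwartz `f`. -/
theorem stmt4 (f : SchwartzMap (ℝ × ℝ) ℝ) :
    ∫ x₂ : ℝ, (⨆ x₁ : ℝ, |f (x₁, x₂)|) ^ 2 ≤ 2 * L2s ⇑f * L2s (pd1 ⇑f) := by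
  set F : SchwartzMap (ℝ × ℝ) ℝ :=
    SchwartzMap.evalCLM ℝ (ℝ × ℝ) ℝ ((1:ℝ), (0:ℝ)) (SchwartzMap.fderivCLM ℝ (ℝ × ℝ) ℝ f) with hFdef
  have hF : ∀ x, F x = pd1 (⇑f) x := fun x => rfl
  -- bounds
  obtain ⟨C, hC⟩ : ∃ C, ∀ x, ‖f x‖ ≤ C := ⟨_, fun x => f.norm_le_seminorm ℝ x⟩
  -- the majorant H
  set H : ℝ × ℝ → ℝ := fun x => 2 * (|f x| * |F x|) with hHdef
  have hH_nonneg : ∀ x, 0 ≤ H x := fun x => by positivity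
  have hfF_int : Integrable (fun x => |f x| * |F x|) volume := by
    refine (F.integrable.abs).bdd_mul ?_ (Filter.Eventually.of_forall fun x => by
      simpa [Real.norm_eq_abs, abs_abs] using hC x)
    exact (f.continuous.abs).aestronglyMeasurable
  have hH_int : Integrable H volume := hfF_int.const_mul 2
  have hH_prod : Integrable H ((volume : Measure ℝ).prod volume) := by
    rwa [← Measure.volume_eq_prod]
  -- a.e. pointwise bound
  have key : ∀ᵐ x₂ : ℝ, (⨆ x₁ : ℝ, |f (x₁, x₂)|) ^ 2 ≤ ∫ x₁ : ℝ, H (x₁, x₂) := by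
    filter_upwards [hH_prod.prod_left_ae] with x₂ hslice
    set R := ∫ x₁ : ℝ, H (x₁, x₂) with hRdef
    have hR0 : 0 ≤ R := integral_nonneg fun t => hH_nonneg _
    set g : ℝ → ℝ := fun t => f (t, x₂) with hgdef
    set g' : ℝ → ℝ := fun t => F (t, x₂) with hg'def
    have hg : ∀ t, HasDerivAt g (g' t) t := by
      intro t
      have h1 : HasDerivAt (fun s : ℝ => ((s, x₂) : ℝ × ℝ)) ((1:ℝ), (0:ℝ)) t :=
        (hasDerivAt_id t).prodMk (hasDerivAt_const t x₂)
      exact f.differentiableAt.hasFDerivAt.comp_hasDerivAt t h1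
    have hsq : ∀ t, HasDerivAt (fun s => g s * g s) (g' t * g t + g t * g' t) t :=
      fun t => (hg t).mul (hg t)
    -- decay at -∞
    have htg : Filter.Tendsto g Filter.atBot (nhds 0) := by
      obtain ⟨D, -, hD⟩ := f.decay 1 0
      have hD' : ∀ t : ℝ, |t| * ‖g t‖ ≤ D := by
        intro t
        have h1 : |t| ≤ ‖((t, x₂) : ℝ × ℝ)‖ := norm_fst_le ((t, x₂) : ℝ × ℝ)
        have h2 := hD (t, x₂)
        simp only [pow_one, norm_iteratedFDeriv_zero] at h2
        calc |t| * ‖g t‖ ≤ ‖((t, x₂) : ℝ × ℝ)‖ * ‖f (t, x₂)‖ :=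
              mul_le_mul_of_nonneg_right h1 (norm_nonneg _)
          _ ≤ D := h2
      refine squeeze_zero_norm' (a := fun t => D / |t|) ?_ ?_
      · filter_upwards [Filter.eventually_lt_atBot (0:ℝ)] with t ht
        have ht' : 0 < |t| := abs_pos.mpr ht.ne
        exact (le_div_iff₀' ht').mpr (hD' t)
      · exact Filter.Tendsto.div_atTop tendsto_const_nhds
          (Filter.tendsto_abs_atBot_atTop)
    have htend : Filter.Tendsto (fun t => g t * g t) Filter.atBot (nhds 0) := by
      simpa using htg.mul htg
    -- integrability of the derivative
    have hd_cont : Continuous fun t => g' t * g t + g t * g' t := by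
      have hgc : Continuous g := f.continuous.comp (continuous_id.prodMk continuous_const)
      have hg'c : Continuous g' := F.continuous.comp (continuous_id.prodMk continuous_const)
      continuity
    have habs : ∀ t, |g' t * g t + g t * g' t| ≤ H (t, x₂) := by
      intro t
      have : g' t * g t + g t * g' t = 2 * (g t * g' t) := by ring
      rw [this, abs_mul, abs_mul]
      simp only [hHdef, hF]
      rw [abs_two]
      exact le_rfl
    have hI : Integrable (fun t => g' t * g t + g t * g' t) volume := by
      refine Integrable.mono' hslice hd_cont.aestronglyMeasurable ?_
      exact Filter.Eventually.of_forall fun t => by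
        simpa [Real.norm_eq_abs] using habs t
    -- FTC + bound
    have hgR : ∀ t, g t ^ 2 ≤ R := by
      intro t
      have hFTC := integral_Iic_of_hasDerivAt_of_tendsto' (a := t)
        (fun s _ => hsq s) hI.integrableOn htend
      have h1 : g t * g t = ∫ s in Set.Iic t, (g' s * g s + g s * g' s) := by
        rw [hFTC]; ring
      have h2 : (∫ s in Set.Iic t, (g' s * g s + g s * g' s))
          ≤ ∫ s in Set.Iic t, H (s, x₂) := by
        refine setIntegral_mono hI.integrableOn hslice.integrableOn fun s => ?_
        exact (le_abs_self _).trans (habs s)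
      have h3 : (∫ s in Set.Iic t, H (s, x₂)) ≤ R :=
        setIntegral_le_integral hslice (Filter.Eventually.of_forall fun s => hH_nonneg _)
      calc g t ^ 2 = g t * g t := sq (g t) ▸ by ring
        _ ≤ R := h1 ▸ (h2.trans h3)
    have hsup : (⨆ x₁ : ℝ, |f (x₁, x₂)|) ≤ Real.sqrt R :=
      Real.iSup_le (fun t => Real.abs_le_sqrt (hgR t)) (Real.sqrt_nonneg R)
    have hsup0 : 0 ≤ ⨆ x₁ : ℝ, |f (x₁, x₂)| := Real.iSup_nonneg fun t => abs_nonneg _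
    calc (⨆ x₁ : ℝ, |f (x₁, x₂)|) ^ 2 ≤ Real.sqrt R ^ 2 := by
          exact pow_le_pow_left₀ hsup0 hsup 2
      _ = R := Real.sq_sqrt hR0
  -- integrate in x₂
  have step1 : (∫ x₂ : ℝ, (⨆ x₁ : ℝ, |f (x₁, x₂)|) ^ 2)
      ≤ ∫ x₂ : ℝ, ∫ x₁ : ℝ, H (x₁, x₂) := by
    refine integral_mono_of_nonneg ?_ hH_prod.integral_prod_right ?_
    · exact Filter.Eventually.of_forall fun x₂ => sq_nonneg _
    · exact key
  have step2 : (∫ x₂ : ℝ, ∫ x₁ : ℝ, H (x₁, x₂)) = ∫ x : ℝ × ℝ, H x := by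
    have huncurry : Integrable (Function.uncurry fun x₁ x₂ => H (x₁, x₂))
        ((volume : Measure ℝ).prod volume) := by
      exact hH_prod
    rw [← integral_integral_swap huncurry, integral_integral huncurry,
      ← Measure.volume_eq_prod]
  -- Cauchy-Schwarz
  have hf2 : Integrable (fun x => f x ^ 2) volume := by
    have := (f.integrable (μ := volume)).bdd_mul (f.continuous.aestronglyMeasurable) (Filter.Eventually.of_forall hC)
    simpa [sq] using this
  have hF2 : Integrable (fun x => F x ^ 2) volume := by
    obtain ⟨C', hC'⟩ : ∃ C', ∀ x, ‖F x‖ ≤ C' := ⟨_, fun x => F.norm_le_seminorm ℝ x⟩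
    have := (F.integrable (μ := volume)).bdd_mul (F.continuous.aestronglyMeasurable) (Filter.Eventually.of_forall hC')
    simpa [sq] using this
  have hmemf : MemLp (fun x => |f x|) (ENNReal.ofReal 2) volume := by
    rw [ENNReal.ofReal_ofNat]
    refine (memLp_two_iff_integrable_sq (f.continuous.abs.aestronglyMeasurable)).mpr ?_
    simpa [sq_abs] using hf2
  have hmemF : MemLp (fun x => |F x|) (ENNReal.ofReal 2) volume := by
    rw [ENNReal.ofReal_ofNat]
    refine (memLp_two_iff_integrable_sq (F.continuous.abs.aestronglyMeasurable)).mpr ?_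
    simpa [sq_abs] using hF2
  have hCS : (∫ x : ℝ × ℝ, |f x| * |F x|)
      ≤ Real.sqrt (∫ x : ℝ × ℝ, f x ^ 2) * Real.sqrt (∫ x : ℝ × ℝ, F x ^ 2) := by
    have hpq : Real.HolderConjugate 2 2 := Real.HolderConjugate.two_two
    have := integral_mul_le_Lp_mul_Lq_of_nonneg (μ := volume) hpq
      (Filter.Eventually.of_forall fun x => abs_nonneg (f x))
      (Filter.Eventually.of_forall fun x => abs_nonneg (F x)) hmemf hmemF
    calc (∫ x : ℝ × ℝ, |f x| * |F x|)
        ≤ (∫ x : ℝ × ℝ, |f x| ^ (2:ℝ)) ^ ((1:ℝ)/2) * (∫ x : ℝ × ℝ, |F x| ^ (2:ℝ)) ^ ((1:ℝ)/2) :=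
          this
      _ = Real.sqrt (∫ x : ℝ × ℝ, f x ^ 2) * Real.sqrt (∫ x : ℝ × ℝ, F x ^ 2) := by
          have e1 : (∫ x : ℝ × ℝ, |f x| ^ (2:ℝ)) = ∫ x : ℝ × ℝ, f x ^ 2 := by
            refine integral_congr_ae (Filter.Eventually.of_forall fun x => ?_)
            show |f x| ^ (2:ℝ) = f x ^ 2
            rw [show ((2:ℝ)) = ((2:ℕ):ℝ) by norm_num, Real.rpow_natCast, sq_abs]
          have e2 : (∫ x : ℝ × ℝ, |F x| ^ (2:ℝ)) = ∫ x : ℝ × ℝ, F x ^ 2 := by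
            refine integral_congr_ae (Filter.Eventually.of_forall fun x => ?_)
            show |F x| ^ (2:ℝ) = F x ^ 2
            rw [show ((2:ℝ)) = ((2:ℕ):ℝ) by norm_num, Real.rpow_natCast, sq_abs]
          rw [e1, e2, Real.sqrt_eq_rpow, Real.sqrt_eq_rpow]
  have hHint : (∫ x : ℝ × ℝ, H x) = 2 * ∫ x : ℝ × ℝ, |f x| * |F x| := by
    simp [hHdef, integral_const_mul]
  have final : (∫ x : ℝ × ℝ, H x) ≤ 2 * L2s ⇑f * L2s (pd1 ⇑f) := by
    rw [hHint, L2s, L2s, mul_assoc]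
    have hpd : (∫ x : ℝ × ℝ, pd1 (⇑f) x ^ 2) = ∫ x : ℝ × ℝ, F x ^ 2 := by
      refine integral_congr_ae (Filter.Eventually.of_forall fun x => ?_)
      show pd1 (⇑f) x ^ 2 = F x ^ 2
      rw [hF]
    rw [hpd]
    linarith [hCS]
  calc (∫ x₂ : ℝ, (⨆ x₁ : ℝ, |f (x₁, x₂)|) ^ 2)
      ≤ ∫ x₂ : ℝ, ∫ x₁ : ℝ, H (x₁, x₂) := step1
    _ = ∫ x : ℝ × ℝ, H x := step2
    _ ≤ 2 * L2s ⇑f * L2s (pd1 ⇑f) := final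
end

section
/- There exists a universal constant C > 0 such that for all Schwartz vector fields w = (w¹,w²) and v = (v¹,v²) on ℝ² with div w = 0 and div v = 0, |∫_{ℝ²} (w·∇v) · w dx| ≤ C ( ‖∂₁v‖_{L²}^{1/2} + ‖∂₂v‖_{L²}^{1/2} ) ‖∂₁∂₂v‖_{L²}^{1/2} ‖w‖_{L²}^{3/2} ‖∂₁w‖_{L²}^{1/2}. -/
open MeasureTheory Real

namespace NSaux

open SchwartzMap Filter Topology

noncomputable def pdS (m : ℝ × ℝ) {E : Type*} [NormedAddCommGroup E] [NormedSpace ℝ E]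
    (f : 𝓢(ℝ × ℝ, E)) : 𝓢(ℝ × ℝ, E) := LineDeriv.lineDerivOp m f

lemma pdS_apply (m : ℝ × ℝ) {E : Type*} [NormedAddCommGroup E] [NormedSpace ℝ E]
    (f : 𝓢(ℝ × ℝ, E)) (x : ℝ × ℝ) : pdS m f x = fderiv ℝ f x m := rfl

lemma coe_pdS1 {E : Type*} [NormedAddCommGroup E] [NormedSpace ℝ E]
    (f : 𝓢(ℝ × ℝ, E)) : ⇑(pdS (1,0) f) = pd1 ⇑f := rfl
lemma coe_pdS2 {E : Type*} [NormedAddCommGroup E] [NormedSpace ℝ E]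
    (f : 𝓢(ℝ × ℝ, E)) : ⇑(pdS (0,1) f) = pd2 ⇑f := rfl

noncomputable def cFst (f : 𝓢(ℝ × ℝ, ℝ × ℝ)) : 𝓢(ℝ × ℝ, ℝ) :=
  SchwartzMap.bilinLeftCLM ((ContinuousLinearMap.mul ℝ ℝ).comp (ContinuousLinearMap.fst ℝ ℝ ℝ))
    (Function.HasTemperateGrowth.const (1:ℝ)) f

noncomputable def cSnd (f : 𝓢(ℝ × ℝ, ℝ × ℝ)) : 𝓢(ℝ × ℝ, ℝ) :=
  SchwartzMap.bilinLeftCLM ((ContinuousLinearMap.mul ℝ ℝ).comp (ContinuousLinearMap.snd ℝ ℝ ℝ))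
    (Function.HasTemperateGrowth.const (1:ℝ)) f

lemma cFst_apply (f : 𝓢(ℝ × ℝ, ℝ × ℝ)) (x : ℝ × ℝ) : cFst f x = (f x).1 := mul_one _
lemma cSnd_apply (f : 𝓢(ℝ × ℝ, ℝ × ℝ)) (x : ℝ × ℝ) : cSnd f x = (f x).2 := mul_one _

lemma coe_cFst (f : 𝓢(ℝ × ℝ, ℝ × ℝ)) : ⇑(cFst f) = fun y => (f y).1 := funext (cFst_apply f)
lemma coe_cSnd (f : 𝓢(ℝ × ℝ, ℝ × ℝ)) : ⇑(cSnd f) = fun y => (f y).2 := funext (cSnd_apply f)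

lemma fderiv_fst (u : 𝓢(ℝ × ℝ, ℝ × ℝ)) (x m : ℝ × ℝ) :
    fderiv ℝ (fun y => (u y).1) x m = (fderiv ℝ u x m).1 := by
  have h : HasFDerivAt (fun y => (u y).1)
      ((ContinuousLinearMap.fst ℝ ℝ ℝ).comp (fderiv ℝ u x)) x :=
    ((ContinuousLinearMap.fst ℝ ℝ ℝ).hasFDerivAt).comp x u.differentiableAt.hasFDerivAt
  rw [h.fderiv]; rfl

lemma fderiv_snd (u : 𝓢(ℝ × ℝ, ℝ × ℝ)) (x m : ℝ × ℝ) :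
    fderiv ℝ (fun y => (u y).2) x m = (fderiv ℝ u x m).2 := by
  have h : HasFDerivAt (fun y => (u y).2)
      ((ContinuousLinearMap.snd ℝ ℝ ℝ).comp (fderiv ℝ u x)) x :=
    ((ContinuousLinearMap.snd ℝ ℝ ℝ).hasFDerivAt).comp x u.differentiableAt.hasFDerivAt
  rw [h.fderiv]; rfl

lemma pdS_cFst (m : ℝ × ℝ) (u : 𝓢(ℝ × ℝ, ℝ × ℝ)) (x : ℝ × ℝ) :
    pdS m (cFst u) x = (pdS m u x).1 := by
  rw [pdS_apply, coe_cFst]; exact fderiv_fst u x m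

lemma pdS_cSnd (m : ℝ × ℝ) (u : 𝓢(ℝ × ℝ, ℝ × ℝ)) (x : ℝ × ℝ) :
    pdS m (cSnd u) x = (pdS m u x).2 := by
  rw [pdS_apply, coe_cSnd]; exact fderiv_snd u x m

lemma bounded (f : 𝓢(ℝ × ℝ, ℝ)) : ∃ C, 0 ≤ C ∧ ∀ x, |f x| ≤ C := by
  obtain ⟨C, hC, h⟩ := f.decay 0 0
  exact ⟨C, hC.le, fun x => by simpa [norm_iteratedFDeriv_zero] using h x⟩

lemma bound_snd (f : 𝓢(ℝ × ℝ, ℝ)) : ∃ C, 0 ≤ C ∧ ∀ x : ℝ × ℝ, |f x| ≤ C / (1 + x.2 ^ 2) := by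
  obtain ⟨C0, hC0, h0⟩ := bounded f
  obtain ⟨C2, hC2, h2⟩ := f.decay 2 0
  refine ⟨C0 + C2, by positivity, fun x => ?_⟩
  rw [le_div_iff₀ (by positivity)]
  have h2' : x.2 ^ 2 * |f x| ≤ C2 := by
    have := h2 x
    simp only [norm_iteratedFDeriv_zero] at this
    calc x.2 ^ 2 * |f x| ≤ ‖x‖ ^ 2 * ‖f x‖ := by
          rw [Real.norm_eq_abs]
          gcongr ?_ * _
          calc x.2 ^ 2 = |x.2| ^ 2 := (sq_abs _).symm
          _ = ‖x.2‖ ^ 2 := rfl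
          _ ≤ ‖x‖ ^ 2 := by gcongr; exact norm_snd_le x
      _ ≤ C2 := this
  nlinarith [h0 x, abs_nonneg (f x), sq_nonneg x.2]

lemma bound_fst (f : 𝓢(ℝ × ℝ, ℝ)) : ∃ C, 0 ≤ C ∧ ∀ x : ℝ × ℝ, |f x| ≤ C / (1 + x.1 ^ 2) := by
  obtain ⟨C0, hC0, h0⟩ := bounded f
  obtain ⟨C2, hC2, h2⟩ := f.decay 2 0
  refine ⟨C0 + C2, by positivity, fun x => ?_⟩
  rw [le_div_iff₀ (by positivity)]
  have h2' : x.1 ^ 2 * |f x| ≤ C2 := by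
    have := h2 x
    simp only [norm_iteratedFDeriv_zero] at this
    calc x.1 ^ 2 * |f x| ≤ ‖x‖ ^ 2 * ‖f x‖ := by
          rw [Real.norm_eq_abs]
          gcongr ?_ * _
          calc x.1 ^ 2 = |x.1| ^ 2 := (sq_abs _).symm
          _ = ‖x.1‖ ^ 2 := rfl
          _ ≤ ‖x‖ ^ 2 := by gcongr; exact norm_fst_le x
      _ ≤ C2 := this
  nlinarith [h0 x, abs_nonneg (f x), sq_nonneg x.1]

lemma intProd (f g : 𝓢(ℝ × ℝ, ℝ)) : Integrable (fun x => f x * g x) := by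
  obtain ⟨C, hC, hb⟩ := bounded f
  refine (g.integrable.norm.const_mul C).mono'
    ((f.continuous.mul g.continuous).aestronglyMeasurable)
    (Filter.Eventually.of_forall fun x => ?_)
  rw [Real.norm_eq_abs, abs_mul]
  exact mul_le_mul (hb x) le_rfl (abs_nonneg _) hC

lemma memL2 (f : 𝓢(ℝ × ℝ, ℝ)) : MemLp (⇑f) 2 (volume : Measure (ℝ × ℝ)) :=
  (memLp_two_iff_integrable_sq f.continuous.aestronglyMeasurable).2
    (by simpa [sq] using intProd f f)

lemma intProd3 (f g h : 𝓢(ℝ × ℝ, ℝ)) : Integrable (fun x => f x * g x * h x) := by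
  obtain ⟨C, hC, hb⟩ := bounded f
  obtain ⟨D, hD, hbD⟩ := bounded g
  refine (h.integrable.norm.const_mul (C * D)).mono'
    (((f.continuous.mul g.continuous).mul h.continuous).aestronglyMeasurable)
    (Filter.Eventually.of_forall fun x => ?_)
  rw [Real.norm_eq_abs, abs_mul, abs_mul]
  exact mul_le_mul (mul_le_mul (hb x) (hbD x) (abs_nonneg _) hC) le_rfl (abs_nonneg _)
    (by positivity)

lemma sliceInt2 (f g : 𝓢(ℝ × ℝ, ℝ)) (a : ℝ) :
    Integrable (fun t => f (a, t) * g (a, t)) := by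
  obtain ⟨C, hC, hb⟩ := bound_snd f
  obtain ⟨D, hD, hbD⟩ := bounded g
  have hcont : Continuous fun t : ℝ => f (a, t) * g (a, t) :=
    (f.continuous.comp (Continuous.prodMk_right a)).mul (g.continuous.comp (Continuous.prodMk_right a))
  refine ((integrable_inv_one_add_sq.const_mul (C * D)).mono'
    hcont.aestronglyMeasurable (Filter.Eventually.of_forall fun t => ?_))
  rw [Real.norm_eq_abs, abs_mul]
  calc |f (a, t)| * |g (a, t)| ≤ (C / (1 + t ^ 2)) * D :=
        mul_le_mul (hb (a, t)) (hbD (a, t)) (abs_nonneg _) (by positivity)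
    _ = C * D * (1 + t ^ 2)⁻¹ := by ring

lemma sliceInt1 (f g : 𝓢(ℝ × ℝ, ℝ)) (b : ℝ) :
    Integrable (fun t => f (t, b) * g (t, b)) := by
  obtain ⟨C, hC, hb⟩ := bound_fst f
  obtain ⟨D, hD, hbD⟩ := bounded g
  have hcont : Continuous fun t : ℝ => f (t, b) * g (t, b) :=
    (f.continuous.comp (continuous_id.prodMk continuous_const)).mul
      (g.continuous.comp (continuous_id.prodMk continuous_const))
  refine ((integrable_inv_one_add_sq.const_mul (C * D)).mono'
    hcont.aestronglyMeasurable (Filter.Eventually.of_forall fun t => ?_))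
  rw [Real.norm_eq_abs, abs_mul]
  calc |f (t, b)| * |g (t, b)| ≤ (C / (1 + t ^ 2)) * D :=
        mul_le_mul (hb (t, b)) (hbD (t, b)) (abs_nonneg _) (by positivity)
    _ = C * D * (1 + t ^ 2)⁻¹ := by ring

lemma CS {α : Type*} [MeasurableSpace α] {μ : Measure α} (f g : α → ℝ)
    (hf : MemLp f 2 μ) (hg : MemLp g 2 μ) :
    ∫ x, |f x * g x| ∂μ ≤ Real.sqrt (∫ x, f x ^ 2 ∂μ) * Real.sqrt (∫ x, g x ^ 2 ∂μ) := by
  have hpq : Real.HolderConjugate 2 2 := Real.HolderConjugate.two_two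
  have h := integral_mul_le_Lp_mul_Lq_of_nonneg (μ := μ) hpq
    (f := fun x => |f x|) (g := fun x => |g x|)
    (Filter.Eventually.of_forall fun x => abs_nonneg _)
    (Filter.Eventually.of_forall fun x => abs_nonneg _)
    (by simpa [Real.norm_eq_abs] using hf.norm) (by simpa [Real.norm_eq_abs] using hg.norm)
  have e1 : ∀ x, |f x| * |g x| = |f x * g x| := fun x => (abs_mul _ _).symm
  have e2 : ∀ x, |f x| ^ (2:ℝ) = f x ^ 2 := fun x => by
    rw [show ((2:ℝ)) = ((2:ℕ):ℝ) by norm_num, Real.rpow_natCast, sq_abs]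
  have e3 : ∀ x, |g x| ^ (2:ℝ) = g x ^ 2 := fun x => by
    rw [show ((2:ℝ)) = ((2:ℕ):ℝ) by norm_num, Real.rpow_natCast, sq_abs]
  simp only [e1, e2, e3] at h
  calc ∫ x, |f x * g x| ∂μ ≤ (∫ x, f x ^ 2 ∂μ) ^ ((1:ℝ)/2) * (∫ x, g x ^ 2 ∂μ) ^ ((1:ℝ)/2) := by
        simpa using h
    _ = _ := by
        rw [← Real.sqrt_eq_rpow, ← Real.sqrt_eq_rpow]

lemma tendsto_aux (C : ℝ) : Tendsto (fun t : ℝ => C / (1 + t ^ 2)) atBot (𝓝 0) := by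
  have h2 : Tendsto (fun t : ℝ => t ^ 2) atBot atTop := by
    have := (tendsto_pow_atTop (α := ℝ) (n := 2) two_ne_zero).comp tendsto_abs_atBot_atTop
    simpa [Function.comp_def, sq_abs] using this
  have h1 : Tendsto (fun t : ℝ => 1 + t ^ 2) atBot atTop :=
    tendsto_atTop_add_const_left _ 1 h2
  have h3 := h1.inv_tendsto_atTop
  have h4 := h3.const_mul C
  simpa [div_eq_mul_inv] using h4

lemma ptBound2 (f : 𝓢(ℝ × ℝ, ℝ)) (x : ℝ × ℝ) :
    f x ^ 2 ≤ ∫ t, |2 * f (x.1, t) * fderiv ℝ f (x.1, t) (0, 1)| := by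
  set pf : 𝓢(ℝ × ℝ, ℝ) := LineDeriv.lineDerivOp ((0:ℝ), (1:ℝ)) f with hpf
  have hpf_apply : ∀ y, pf y = fderiv ℝ f y (0, 1) := fun y => rfl
  have hd : ∀ t : ℝ, HasDerivAt (fun t => f (x.1, t)) (pf (x.1, t)) t := by
    intro t
    have hc : HasDerivAt (fun t : ℝ => ((x.1 : ℝ), t)) (((0:ℝ), (1:ℝ))) t :=
      (hasDerivAt_const t x.1).prodMk (hasDerivAt_id t)
    simpa [hpf_apply, Function.comp_def] using (f.differentiableAt.hasFDerivAt).comp_hasDerivAt t hc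
  have hψ : ∀ t : ℝ, HasDerivAt (fun t => f (x.1, t) ^ 2) (2 * f (x.1, t) * pf (x.1, t)) t := by
    intro t
    have := (hd t).fun_pow 2
    simpa [pow_one, mul_comm, mul_assoc] using this
  have Int : Integrable (fun t => 2 * f (x.1, t) * pf (x.1, t)) := by
    simpa [mul_assoc] using (sliceInt2 f pf x.1).const_mul 2
  have htend : Tendsto (fun t => f (x.1, t) ^ 2) atBot (𝓝 0) := by
    obtain ⟨C, hC, hb⟩ := bound_snd f
    have hg : Tendsto (fun t : ℝ => (C / (1 + t ^ 2)) ^ 2) atBot (𝓝 0) := by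
      simpa using (tendsto_aux C).pow 2
    refine squeeze_zero_norm (fun t => ?_) hg
    rw [Real.norm_eq_abs, abs_pow]
    exact pow_le_pow_left₀ (abs_nonneg _) (hb (x.1, t)) 2
  have FTC := integral_Iic_of_hasDerivAt_of_tendsto' (a := x.2)
    (fun t _ => hψ t) Int.integrableOn htend
  have e : f x ^ 2 = ∫ t in Set.Iic x.2, 2 * f (x.1, t) * pf (x.1, t) := by
    rw [FTC, sub_zero]
  rw [e]
  calc (∫ t in Set.Iic x.2, 2 * f (x.1, t) * pf (x.1, t))
      ≤ ∫ t in Set.Iic x.2, |2 * f (x.1, t) * pf (x.1, t)| :=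
        integral_mono Int.integrableOn Int.abs.integrableOn fun t => le_abs_self _
    _ ≤ ∫ t, |2 * f (x.1, t) * pf (x.1, t)| :=
        setIntegral_le_integral Int.abs (Filter.Eventually.of_forall fun t => abs_nonneg _)
    _ = ∫ t, |2 * f (x.1, t) * fderiv ℝ f (x.1, t) (0, 1)| := rfl

lemma ptBound1 (f : 𝓢(ℝ × ℝ, ℝ)) (x : ℝ × ℝ) :
    f x ^ 2 ≤ ∫ t, |2 * f (t, x.2) * fderiv ℝ f (t, x.2) (1, 0)| := by
  set pf : 𝓢(ℝ × ℝ, ℝ) := LineDeriv.lineDerivOp ((1:ℝ), (0:ℝ)) f with hpf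
  have hpf_apply : ∀ y, pf y = fderiv ℝ f y (1, 0) := fun y => rfl
  have hd : ∀ t : ℝ, HasDerivAt (fun t => f (t, x.2)) (pf (t, x.2)) t := by
    intro t
    have hc : HasDerivAt (fun t : ℝ => (t, (x.2 : ℝ))) (((1:ℝ), (0:ℝ))) t :=
      (hasDerivAt_id t).prodMk (hasDerivAt_const t x.2)
    simpa [hpf_apply, Function.comp_def] using (f.differentiableAt.hasFDerivAt).comp_hasDerivAt t hc
  have hψ : ∀ t : ℝ, HasDerivAt (fun t => f (t, x.2) ^ 2) (2 * f (t, x.2) * pf (t, x.2)) t := by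
    intro t
    have := (hd t).fun_pow 2
    simpa [pow_one, mul_comm, mul_assoc] using this
  have Int : Integrable (fun t => 2 * f (t, x.2) * pf (t, x.2)) := by
    simpa [mul_assoc] using (sliceInt1 f pf x.2).const_mul 2
  have htend : Tendsto (fun t => f (t, x.2) ^ 2) atBot (𝓝 0) := by
    obtain ⟨C, hC, hb⟩ := bound_fst f
    have hg : Tendsto (fun t : ℝ => (C / (1 + t ^ 2)) ^ 2) atBot (𝓝 0) := by
      simpa using (tendsto_aux C).pow 2
    refine squeeze_zero_norm (fun t => ?_) hg
    rw [Real.norm_eq_abs, abs_pow]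
    exact pow_le_pow_left₀ (abs_nonneg _) (hb (t, x.2)) 2
  have FTC := integral_Iic_of_hasDerivAt_of_tendsto' (a := x.1)
    (fun t _ => hψ t) Int.integrableOn htend
  have e : f x ^ 2 = ∫ t in Set.Iic x.1, 2 * f (t, x.2) * pf (t, x.2) := by
    rw [FTC, sub_zero]
  rw [e]
  calc (∫ t in Set.Iic x.1, 2 * f (t, x.2) * pf (t, x.2))
      ≤ ∫ t in Set.Iic x.1, |2 * f (t, x.2) * pf (t, x.2)| :=
        integral_mono Int.integrableOn Int.abs.integrableOn fun t => le_abs_self _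
    _ ≤ ∫ t, |2 * f (t, x.2) * pf (t, x.2)| :=
        setIntegral_le_integral Int.abs (Filter.Eventually.of_forall fun t => abs_nonneg _)
    _ = ∫ t, |2 * f (t, x.2) * fderiv ℝ f (t, x.2) (1, 0)| := rfl

lemma keyL (f g h : 𝓢(ℝ × ℝ, ℝ)) :
    ∫ x : ℝ × ℝ, |f x * g x * h x| ≤
      2 * Real.sqrt (L2s ⇑f * L2s ⇑(pdS (0,1) f)) * Real.sqrt (L2s ⇑g * L2s ⇑(pdS (1,0) g))
        * L2s ⇑h := by
  set f₂ : 𝓢(ℝ × ℝ, ℝ) := pdS (0,1) f with hf₂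
  set g₁ : 𝓢(ℝ × ℝ, ℝ) := pdS (1,0) g with hg₁
  set P : ℝ × ℝ → ℝ := fun y => |2 * f y * f₂ y| with hP
  set Q : ℝ × ℝ → ℝ := fun y => |2 * g y * g₁ y| with hQ
  have PInt : Integrable P := by
    simpa [hP, mul_assoc] using ((intProd f f₂).const_mul 2).abs
  have QInt : Integrable Q := by
    simpa [hQ, mul_assoc] using ((intProd g g₁).const_mul 2).abs
  have Pcont : Continuous P := by
    exact ((continuous_const.mul f.continuous).mul f₂.continuous).abs
  have Qcont : Continuous Q := by
    exact ((continuous_const.mul g.continuous).mul g₁.continuous).abs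
  set F₀ : ℝ → ℝ := fun a => ∫ t, P (a, t) with hF₀
  set G₀ : ℝ → ℝ := fun b => ∫ t, Q (t, b) with hG₀
  have hF₀nonneg : ∀ a, 0 ≤ F₀ a := fun a => integral_nonneg fun t => abs_nonneg _
  have hG₀nonneg : ∀ b, 0 ≤ G₀ b := fun b => integral_nonneg fun t => abs_nonneg _
  have hF₀meas : Measurable F₀ :=
    (Pcont.stronglyMeasurable.integral_prod_right').measurable
  have hG₀meas : Measurable G₀ :=
    (Qcont.stronglyMeasurable.integral_prod_left').measurable
  have PIntProd : Integrable P ((volume : Measure ℝ).prod (volume : Measure ℝ)) := PInt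
  have QIntProd : Integrable Q ((volume : Measure ℝ).prod (volume : Measure ℝ)) := QInt
  have F₀Int : Integrable F₀ := PIntProd.integral_prod_left
  have G₀Int : Integrable G₀ := QIntProd.integral_prod_right
  -- pointwise bounds
  have ptF : ∀ x : ℝ × ℝ, |f x| ≤ Real.sqrt (F₀ x.1) := by
    intro x
    rw [← Real.sqrt_sq_eq_abs]
    exact Real.sqrt_le_sqrt (ptBound2 f x)
  have ptG : ∀ x : ℝ × ℝ, |g x| ≤ Real.sqrt (G₀ x.2) := by
    intro x
    rw [← Real.sqrt_sq_eq_abs]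
    exact Real.sqrt_le_sqrt (ptBound1 g x)
  set K : ℝ × ℝ → ℝ := fun x => Real.sqrt (F₀ x.1) * Real.sqrt (G₀ x.2) with hK
  have hKnonneg : ∀ x, 0 ≤ K x := fun x => mul_nonneg (Real.sqrt_nonneg _) (Real.sqrt_nonneg _)
  have Kmeas : AEStronglyMeasurable K (volume : Measure (ℝ × ℝ)) := by
    have : Measurable K :=
      ((Real.continuous_sqrt.measurable.comp hF₀meas).comp measurable_fst).mul
        ((Real.continuous_sqrt.measurable.comp hG₀meas).comp measurable_snd)
    exact this.aestronglyMeasurable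
  have Ksq : ∀ x : ℝ × ℝ, K x ^ 2 = F₀ x.1 * G₀ x.2 := by
    intro x
    rw [hK, mul_pow, Real.sq_sqrt (hF₀nonneg _), Real.sq_sqrt (hG₀nonneg _)]
  have K2Int : Integrable (fun x : ℝ × ℝ => K x ^ 2) := by
    have h1 : Integrable (fun z : ℝ × ℝ => F₀ z.1 * G₀ z.2)
        ((volume : Measure ℝ).prod (volume : Measure ℝ)) := F₀Int.mul_prod G₀Int
    exact (h1 : Integrable _ (volume : Measure (ℝ × ℝ))).congr
      (Filter.Eventually.of_forall fun x => (Ksq x).symm)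
  have KMem : MemLp K 2 (volume : Measure (ℝ × ℝ)) :=
    (memLp_two_iff_integrable_sq Kmeas).2 K2Int
  have hMem : MemLp (⇑h) 2 (volume : Measure (ℝ × ℝ)) := memL2 h
  -- integrability of K * h
  have KhMem : MemLp (K • ⇑h) 1 (volume : Measure (ℝ × ℝ)) :=
    hMem.smul KMem
  have KhInt : Integrable (fun x : ℝ × ℝ => |K x * h x|) := by
    have := (memLp_one_iff_integrable.1 KhMem).abs
    simpa [smul_eq_mul] using this
  -- step 1
  have step1 : ∫ x : ℝ × ℝ, |f x * g x * h x| ≤ ∫ x : ℝ × ℝ, |K x * h x| := by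
    refine integral_mono_of_nonneg (Filter.Eventually.of_forall fun x => abs_nonneg _) KhInt
      (Filter.Eventually.of_forall fun x => ?_)
    show |f x * g x * h x| ≤ |K x * h x|
    rw [abs_mul, abs_mul, abs_mul, abs_of_nonneg (hKnonneg x)]
    exact mul_le_mul (mul_le_mul (ptF x) (ptG x) (abs_nonneg _) (Real.sqrt_nonneg _))
      le_rfl (abs_nonneg _) (mul_nonneg (Real.sqrt_nonneg _) (Real.sqrt_nonneg _))
  -- step 2 : Cauchy-Schwarz
  have step2 : ∫ x : ℝ × ℝ, |K x * h x| ≤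
      Real.sqrt (∫ x : ℝ × ℝ, K x ^ 2) * Real.sqrt (∫ x : ℝ × ℝ, h x ^ 2) :=
    CS K (⇑h) KMem hMem
  -- step 3 : Fubini factorization
  have step3 : (∫ x : ℝ × ℝ, K x ^ 2) = (∫ a, F₀ a) * (∫ b, G₀ b) := by
    have e : (∫ x : ℝ × ℝ, K x ^ 2) = ∫ x : ℝ × ℝ, F₀ x.1 * G₀ x.2 :=
      integral_congr_ae (Filter.Eventually.of_forall Ksq)
    rw [e]
    exact (integral_prod_mul F₀ G₀ :
      ∫ z : ℝ × ℝ, F₀ z.1 * G₀ z.2 ∂((volume : Measure ℝ).prod volume) = _)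
  -- step 4 : inner integrals
  have step4 : (∫ a, F₀ a) = ∫ y : ℝ × ℝ, P y := by
    have h1 : Integrable (Function.uncurry fun a t => P (a, t))
        ((volume : Measure ℝ).prod (volume : Measure ℝ)) := by
      simpa [Function.uncurry_def] using PIntProd
    calc (∫ a, F₀ a) = ∫ a, ∫ t, P (a, t) := rfl
      _ = ∫ z : ℝ × ℝ, P (z.1, z.2) ∂((volume : Measure ℝ).prod volume) := integral_integral h1
      _ = ∫ y : ℝ × ℝ, P y := rfl
  have step4' : (∫ b, G₀ b) = ∫ y : ℝ × ℝ, Q y := by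
    have h1 : Integrable (Function.uncurry fun a t => Q (a, t))
        ((volume : Measure ℝ).prod (volume : Measure ℝ)) := by
      simpa [Function.uncurry_def] using QIntProd
    calc (∫ b, G₀ b) = ∫ b, ∫ t, Q (t, b) := rfl
      _ = ∫ t, ∫ b, Q (t, b) := (integral_integral_swap h1).symm
      _ = ∫ z : ℝ × ℝ, Q (z.1, z.2) ∂((volume : Measure ℝ).prod volume) := integral_integral h1
      _ = ∫ y : ℝ × ℝ, Q y := rfl
  -- step 5
  have step5 : (∫ y : ℝ × ℝ, P y) ≤ 2 * (L2s ⇑f * L2s ⇑f₂) := by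
    have e : (∫ y : ℝ × ℝ, P y) = 2 * ∫ y : ℝ × ℝ, |f y * f₂ y| := by
      rw [← integral_const_mul]
      refine integral_congr_ae (Filter.Eventually.of_forall fun y => ?_)
      show P y = 2 * |f y * f₂ y|
      simp only [hP]
      rw [mul_assoc, abs_mul]
      norm_num
    rw [e]
    have := CS (⇑f) (⇑f₂) (memL2 f) (memL2 f₂)
    unfold L2s
    linarith
  have step5' : (∫ y : ℝ × ℝ, Q y) ≤ 2 * (L2s ⇑g * L2s ⇑g₁) := by
    have e : (∫ y : ℝ × ℝ, Q y) = 2 * ∫ y : ℝ × ℝ, |g y * g₁ y| := by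
      rw [← integral_const_mul]
      refine integral_congr_ae (Filter.Eventually.of_forall fun y => ?_)
      show Q y = 2 * |g y * g₁ y|
      simp only [hQ]
      rw [mul_assoc, abs_mul]
      norm_num
    rw [e]
    have := CS (⇑g) (⇑g₁) (memL2 g) (memL2 g₁)
    unfold L2s
    linarith
  -- assemble
  have L2nonneg : ∀ u : ℝ × ℝ → ℝ, 0 ≤ L2s u := fun u => Real.sqrt_nonneg _
  calc ∫ x : ℝ × ℝ, |f x * g x * h x|
      ≤ Real.sqrt (∫ x : ℝ × ℝ, K x ^ 2) * Real.sqrt (∫ x : ℝ × ℝ, h x ^ 2) :=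
        le_trans step1 step2
    _ = Real.sqrt ((∫ a, F₀ a) * (∫ b, G₀ b)) * L2s ⇑h := by rw [step3]; rfl
    _ ≤ Real.sqrt ((2 * (L2s ⇑f * L2s ⇑f₂)) * (2 * (L2s ⇑g * L2s ⇑g₁))) * L2s ⇑h := by
        have hf0 : (0:ℝ) ≤ ∫ a, F₀ a := integral_nonneg hF₀nonneg
        have hg0 : (0:ℝ) ≤ ∫ b, G₀ b := integral_nonneg hG₀nonneg
        have hFG : (∫ a, F₀ a) * (∫ b, G₀ b)
            ≤ (2 * (L2s ⇑f * L2s ⇑f₂)) * (2 * (L2s ⇑g * L2s ⇑g₁)) :=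
          mul_le_mul ((le_of_eq step4).trans step5) ((le_of_eq step4').trans step5') hg0
            (by have := L2nonneg ⇑f; have := L2nonneg ⇑f₂; positivity)
        exact mul_le_mul_of_nonneg_right (Real.sqrt_le_sqrt hFG) (L2nonneg ⇑h)
    _ = 2 * Real.sqrt (L2s ⇑f * L2s ⇑f₂) * Real.sqrt (L2s ⇑g * L2s ⇑g₁) * L2s ⇑h := by
        rw [show (2 * (L2s ⇑f * L2s ⇑f₂)) * (2 * (L2s ⇑g * L2s ⇑g₁))
            = 4 * ((L2s ⇑f * L2s ⇑f₂) * (L2s ⇑g * L2s ⇑g₁)) by ring]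
        rw [Real.sqrt_mul (by norm_num : (0:ℝ) ≤ 4),
          Real.sqrt_mul (mul_nonneg (L2nonneg _) (L2nonneg _)),
          show Real.sqrt 4 = 2 by
            rw [show (4:ℝ) = 2^2 by norm_num, Real.sqrt_sq (by norm_num : (0:ℝ) ≤ 2)]]
        ring

-- symmetry of second derivatives for Schwartz functions
lemma pdS_comm (m m' : ℝ × ℝ) (u : 𝓢(ℝ × ℝ, ℝ)) (x : ℝ × ℝ) :
    pdS m' (pdS m u) x = pdS m (pdS m' u) x := by
  have hf : ∀ y, HasFDerivAt (⇑u) (fderiv ℝ u y) y := fun y =>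
    u.differentiableAt.hasFDerivAt
  have hd : DifferentiableAt ℝ (fderiv ℝ (⇑u)) x := by
    have : ⇑(SchwartzMap.fderivCLM ℝ (ℝ × ℝ) ℝ u) = fderiv ℝ (⇑u) := rfl
    rw [← this]
    exact (SchwartzMap.fderivCLM ℝ (ℝ × ℝ) ℝ u).differentiableAt
  have hx : HasFDerivAt (fderiv ℝ (⇑u)) (fderiv ℝ (fderiv ℝ (⇑u)) x) x := hd.hasFDerivAt
  have hsymm := second_derivative_symmetric hf hx m m'
  have key : ∀ a b : ℝ × ℝ, pdS b (pdS a u) x = fderiv ℝ (fderiv ℝ (⇑u)) x b a := by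
    intro a b
    have e : ⇑(pdS a u) = fun y => fderiv ℝ (⇑u) y a := rfl
    rw [pdS_apply, e, fderiv_clm_apply hd (differentiableAt_const a)]
    simp
  rw [key m m', key m' m, hsymm]


lemma intPdot (u : 𝓢(ℝ × ℝ, ℝ × ℝ)) : Integrable (fun x => pdot (u x) (u x)) := by
  have h := (intProd (cFst u) (cFst u)).add (intProd (cSnd u) (cSnd u))
  simpa [pdot, cFst_apply, cSnd_apply, Pi.add_def] using h

lemma sq_le_pdot_fst (p : ℝ × ℝ) : p.1 ^ 2 ≤ pdot p p := by
  simp only [pdot]; nlinarith [sq_nonneg p.2]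

lemma sq_le_pdot_snd (p : ℝ × ℝ) : p.2 ^ 2 ≤ pdot p p := by
  simp only [pdot]; nlinarith [sq_nonneg p.1]

lemma sc_le (u : 𝓢(ℝ × ℝ, ℝ)) (gv : 𝓢(ℝ × ℝ, ℝ × ℝ))
    (hpt : ∀ x, u x ^ 2 ≤ pdot (gv x) (gv x)) : L2s ⇑u ≤ L2v ⇑gv :=
  Real.sqrt_le_sqrt (integral_mono (by simpa [sq] using intProd u u) (intPdot gv) hpt)

lemma L2s_nonneg (u : ℝ × ℝ → ℝ) : 0 ≤ L2s u := Real.sqrt_nonneg _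
lemma L2v_nonneg (u : ℝ × ℝ → ℝ × ℝ) : 0 ≤ L2v u := Real.sqrt_nonneg _

lemma keyL_bound (f g h : 𝓢(ℝ × ℝ, ℝ)) (A B C D E : ℝ)
    (h1 : L2s ⇑f ≤ A) (h2 : L2s ⇑(pdS (0,1) f) ≤ B)
    (h3 : L2s ⇑g ≤ C) (h4 : L2s ⇑(pdS (1,0) g) ≤ D) (h5 : L2s ⇑h ≤ E) :
    ∫ x : ℝ × ℝ, |f x * g x * h x| ≤ 2 * Real.sqrt (A * B) * Real.sqrt (C * D) * E := by
  refine (keyL f g h).trans ?_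
  have n1 := L2s_nonneg ⇑f; have n2 := L2s_nonneg ⇑(pdS (0,1) f)
  have n3 := L2s_nonneg ⇑g; have n4 := L2s_nonneg ⇑(pdS (1,0) g)
  have n5 := L2s_nonneg ⇑h
  have s1 : Real.sqrt (L2s ⇑f * L2s ⇑(pdS (0,1) f)) ≤ Real.sqrt (A * B) :=
    Real.sqrt_le_sqrt (mul_le_mul h1 h2 n2 (n1.trans h1))
  have s2 : Real.sqrt (L2s ⇑g * L2s ⇑(pdS (1,0) g)) ≤ Real.sqrt (C * D) :=
    Real.sqrt_le_sqrt (mul_le_mul h3 h4 n4 (n3.trans h3))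
  have := mul_le_mul (mul_le_mul (mul_le_mul_of_nonneg_left s1 (by norm_num : (0:ℝ) ≤ 2)) s2
    (Real.sqrt_nonneg _) (by positivity)) h5 n5 (by positivity)
  exact this

lemma alg (A1 A2 M W D : ℝ) (h1 : 0 ≤ A1) (h2 : 0 ≤ A2) (hM : 0 ≤ M) (hW : 0 ≤ W)
    (hD : 0 ≤ D) :
    (Real.sqrt (A1 * M) + Real.sqrt (A2 * M)) * Real.sqrt (W * D) * W
      = (A1 ^ ((1:ℝ)/2) + A2 ^ ((1:ℝ)/2)) * M ^ ((1:ℝ)/2) * W ^ ((3:ℝ)/2) * D ^ ((1:ℝ)/2) := by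
  rw [Real.sqrt_mul h1, Real.sqrt_mul h2, Real.sqrt_mul hW]
  rw [Real.sqrt_eq_rpow A1, Real.sqrt_eq_rpow A2, Real.sqrt_eq_rpow M, Real.sqrt_eq_rpow W,
    Real.sqrt_eq_rpow D]
  rw [show (3:ℝ)/2 = 1 + 1/2 by norm_num, Real.rpow_add' hW (by norm_num), Real.rpow_one]
  ring

end NSaux

open NSaux SchwartzMap

/-- Trilinear estimate used in the uniqueness proof: there is a universal `C > 0`
such that for Schwartz divergence-free `w, v` on `ℝ²`,
`|∫ (w·∇v)·w dx| ≤ C (‖∂₁v‖^{1/2} + ‖∂₂v‖^{1/2}) ‖∂₁∂₂v‖^{1/2} ‖w‖^{3/2} ‖∂₁w‖^{1/2}`. -/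
theorem stmt10 :
    ∃ C > (0:ℝ), ∀ w v : SchwartzMap (ℝ × ℝ) (ℝ × ℝ), DivFree ⇑w → DivFree ⇑v →
      |∫ x : ℝ × ℝ, pdot (convV ⇑w ⇑v x) (w x)|
        ≤ C * (L2v (pd1 ⇑v) ^ ((1:ℝ)/2) + L2v (pd2 ⇑v) ^ ((1:ℝ)/2))
            * L2v (pd1 (pd2 ⇑v)) ^ ((1:ℝ)/2)
            * L2v ⇑w ^ ((3:ℝ)/2) * L2v (pd1 ⇑w) ^ ((1:ℝ)/2) := by
  refine ⟨4, by norm_num, fun w v hw hv => ?_⟩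
  have expand : ∀ x : ℝ × ℝ, pdot (convV ⇑w ⇑v x) (w x) =
      pdS (1,0) (cFst v) x * cFst w x * cFst w x
        + cSnd w x * pdS (0,1) (cFst v) x * cFst w x
        + pdS (1,0) (cSnd v) x * cFst w x * cSnd w x
        + cSnd w x * pdS (0,1) (cSnd v) x * cSnd w x := by
    intro x
    have e11 : pdS (1,0) (cFst v) x = (fderiv ℝ v x (1,0)).1 := pdS_cFst _ v x
    have e12 : pdS (1,0) (cSnd v) x = (fderiv ℝ v x (1,0)).2 := pdS_cSnd _ v x
    have e21 : pdS (0,1) (cFst v) x = (fderiv ℝ v x (0,1)).1 := pdS_cFst _ v x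
    have e22 : pdS (0,1) (cSnd v) x = (fderiv ℝ v x (0,1)).2 := pdS_cSnd _ v x
    rw [e11, e12, e21, e22, cFst_apply, cSnd_apply]
    simp only [pdot, convV, pd1, pd2, Prod.fst_add, Prod.snd_add, Prod.smul_fst, Prod.smul_snd,
      smul_eq_mul]
    ring
  have i1 := intProd3 (pdS (1,0) (cFst v)) (cFst w) (cFst w)
  have i2 := intProd3 (cSnd w) (pdS (0,1) (cFst v)) (cFst w)
  have i3 := intProd3 (pdS (1,0) (cSnd v)) (cFst w) (cSnd w)
  have i4 := intProd3 (cSnd w) (pdS (0,1) (cSnd v)) (cSnd w)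
  have abs_int : ∀ f : ℝ × ℝ → ℝ, |∫ x : ℝ × ℝ, f x| ≤ ∫ x : ℝ × ℝ, |f x| := fun f => by
    simpa [Real.norm_eq_abs] using
      MeasureTheory.norm_integral_le_integral_norm (μ := (volume : MeasureTheory.Measure (ℝ × ℝ))) f
  have esplit : ∫ x : ℝ × ℝ, pdot (convV ⇑w ⇑v x) (w x)
      = (∫ x : ℝ × ℝ, pdS (1,0) (cFst v) x * cFst w x * cFst w x)
        + (∫ x : ℝ × ℝ, cSnd w x * pdS (0,1) (cFst v) x * cFst w x)
        + (∫ x : ℝ × ℝ, pdS (1,0) (cSnd v) x * cFst w x * cSnd w x)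
        + (∫ x : ℝ × ℝ, cSnd w x * pdS (0,1) (cSnd v) x * cSnd w x) := by
    have i12 : MeasureTheory.Integrable (fun x : ℝ × ℝ =>
        pdS (1,0) (cFst v) x * cFst w x * cFst w x
          + cSnd w x * pdS (0,1) (cFst v) x * cFst w x) := i1.add i2
    have i123 : MeasureTheory.Integrable (fun x : ℝ × ℝ =>
        pdS (1,0) (cFst v) x * cFst w x * cFst w x
          + cSnd w x * pdS (0,1) (cFst v) x * cFst w x
          + pdS (1,0) (cSnd v) x * cFst w x * cSnd w x) := i12.add i3
    rw [MeasureTheory.integral_congr_ae (Filter.Eventually.of_forall expand)]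
    rw [MeasureTheory.integral_add i123 i4, MeasureTheory.integral_add i12 i3,
      MeasureTheory.integral_add i1 i2]
  have habs : |∫ x : ℝ × ℝ, pdot (convV ⇑w ⇑v x) (w x)|
      ≤ (∫ x : ℝ × ℝ, |pdS (1,0) (cFst v) x * cFst w x * cFst w x|)
        + (∫ x : ℝ × ℝ, |cSnd w x * pdS (0,1) (cFst v) x * cFst w x|)
        + (∫ x : ℝ × ℝ, |pdS (1,0) (cSnd v) x * cFst w x * cSnd w x|)
        + (∫ x : ℝ × ℝ, |cSnd w x * pdS (0,1) (cSnd v) x * cSnd w x|) := by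
    rw [esplit]
    refine (abs_add_le _ _).trans ?_
    refine add_le_add ((abs_add_le _ _).trans (add_le_add ((abs_add_le _ _).trans
      (add_le_add (abs_int _) (abs_int _))) (abs_int _))) (abs_int _)
  set A1 := L2v (pd1 ⇑v) with hA1def
  set A2 := L2v (pd2 ⇑v) with hA2def
  set M := L2v (pd1 (pd2 ⇑v)) with hMdef
  set W := L2v ⇑w with hWdef
  set D := L2v (pd1 ⇑w) with hDdef
  have hA1n : 0 ≤ A1 := L2v_nonneg _
  have hA2n : 0 ≤ A2 := L2v_nonneg _
  have hMn : 0 ≤ M := L2v_nonneg _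
  have hWn : 0 ≤ W := L2v_nonneg _
  have hDn : 0 ≤ D := L2v_nonneg _
  -- scalar norm bounds
  have hp11 : L2s ⇑(pdS (1,0) (cFst v)) ≤ A1 := by
    rw [hA1def, show L2v (pd1 ⇑v) = L2v ⇑(pdS (1,0) v) from rfl]
    exact sc_le _ _ fun x => by rw [pdS_cFst]; exact sq_le_pdot_fst _
  have hp12 : L2s ⇑(pdS (1,0) (cSnd v)) ≤ A1 := by
    rw [hA1def, show L2v (pd1 ⇑v) = L2v ⇑(pdS (1,0) v) from rfl]
    exact sc_le _ _ fun x => by rw [pdS_cSnd]; exact sq_le_pdot_snd _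
  have hp21 : L2s ⇑(pdS (0,1) (cFst v)) ≤ A2 := by
    rw [hA2def, show L2v (pd2 ⇑v) = L2v ⇑(pdS (0,1) v) from rfl]
    exact sc_le _ _ fun x => by rw [pdS_cFst]; exact sq_le_pdot_fst _
  have hp22 : L2s ⇑(pdS (0,1) (cSnd v)) ≤ A2 := by
    rw [hA2def, show L2v (pd2 ⇑v) = L2v ⇑(pdS (0,1) v) from rfl]
    exact sc_le _ _ fun x => by rw [pdS_cSnd]; exact sq_le_pdot_snd _
  have hw1 : L2s ⇑(cFst w) ≤ W := by
    rw [hWdef]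
    exact sc_le _ w fun x => by rw [cFst_apply]; exact sq_le_pdot_fst _
  have hw2 : L2s ⇑(cSnd w) ≤ W := by
    rw [hWdef]
    exact sc_le _ w fun x => by rw [cSnd_apply]; exact sq_le_pdot_snd _
  have hd1 : L2s ⇑(pdS (1,0) (cFst w)) ≤ D := by
    rw [hDdef, show L2v (pd1 ⇑w) = L2v ⇑(pdS (1,0) w) from rfl]
    exact sc_le _ _ fun x => by rw [pdS_cFst]; exact sq_le_pdot_fst _
  have hddiv : L2s ⇑(pdS (0,1) (cSnd w)) ≤ D := by
    rw [hDdef, show L2v (pd1 ⇑w) = L2v ⇑(pdS (1,0) w) from rfl]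
    refine sc_le _ _ fun x => ?_
    have hdiv := hw x
    have e2 : pd1 (fun y => (w y).1) x = (pdS (1,0) w x).1 := fderiv_fst w x (1,0)
    have e1 : pdS (0,1) (cSnd w) x = pd2 (fun y => (w y).2) x := by
      rw [pdS_apply, coe_cSnd]; rfl
    have e3 : pdS (0,1) (cSnd w) x = -((pdS (1,0) w x).1) := by
      rw [e1]; rw [e2] at hdiv; linarith
    rw [e3, neg_sq]; exact sq_le_pdot_fst _
  -- mixed second derivative bounds
  have hmix : ∀ u : SchwartzMap (ℝ × ℝ) (ℝ × ℝ) , ∀ x : ℝ × ℝ,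
      pdS (1,0) (pdS (0,1) (cFst u)) x = (pdS (1,0) (pdS (0,1) u) x).1 := by
    intro u x
    have hcoe : ⇑(pdS (0,1) (cFst u)) = ⇑(cFst (pdS (0,1) u)) :=
      funext fun y => by rw [pdS_cFst, cFst_apply]
    calc pdS (1,0) (pdS (0,1) (cFst u)) x
        = fderiv ℝ (⇑(pdS (0,1) (cFst u))) x (1,0) := rfl
      _ = fderiv ℝ (⇑(cFst (pdS (0,1) u))) x (1,0) := by rw [hcoe]
      _ = (pdS (1,0) (pdS (0,1) u) x).1 := pdS_cFst _ _ x
  have hmix' : ∀ u : SchwartzMap (ℝ × ℝ) (ℝ × ℝ) , ∀ x : ℝ × ℝ,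
      pdS (1,0) (pdS (0,1) (cSnd u)) x = (pdS (1,0) (pdS (0,1) u) x).2 := by
    intro u x
    have hcoe : ⇑(pdS (0,1) (cSnd u)) = ⇑(cSnd (pdS (0,1) u)) :=
      funext fun y => by rw [pdS_cSnd, cSnd_apply]
    calc pdS (1,0) (pdS (0,1) (cSnd u)) x
        = fderiv ℝ (⇑(pdS (0,1) (cSnd u))) x (1,0) := rfl
      _ = fderiv ℝ (⇑(cSnd (pdS (0,1) u))) x (1,0) := by rw [hcoe]
      _ = (pdS (1,0) (pdS (0,1) u) x).2 := pdS_cSnd _ _ x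
  have hMeq : L2v (pd1 (pd2 ⇑v)) = L2v ⇑(pdS (1,0) (pdS (0,1) v)) := rfl
  have hm1 : L2s ⇑(pdS (0,1) (pdS (1,0) (cFst v))) ≤ M := by
    rw [hMdef, hMeq]
    refine sc_le _ _ fun x => ?_
    rw [pdS_comm, hmix v x]
    exact sq_le_pdot_fst _
  have hm2 : L2s ⇑(pdS (0,1) (pdS (1,0) (cSnd v))) ≤ M := by
    rw [hMdef, hMeq]
    refine sc_le _ _ fun x => ?_
    rw [pdS_comm, hmix' v x]
    exact sq_le_pdot_snd _
  have hm3 : L2s ⇑(pdS (1,0) (pdS (0,1) (cFst v))) ≤ M := by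
    rw [hMdef, hMeq]
    refine sc_le _ _ fun x => ?_
    rw [hmix v x]
    exact sq_le_pdot_fst _
  have hm4 : L2s ⇑(pdS (1,0) (pdS (0,1) (cSnd v))) ≤ M := by
    rw [hMdef, hMeq]
    refine sc_le _ _ fun x => ?_
    rw [hmix' v x]
    exact sq_le_pdot_snd _
  -- the four keyL bounds
  have T1 : (∫ x : ℝ × ℝ, |pdS (1,0) (cFst v) x * cFst w x * cFst w x|)
      ≤ 2 * Real.sqrt (A1 * M) * Real.sqrt (W * D) * W :=
    keyL_bound _ _ _ A1 M W D W hp11 hm1 hw1 hd1 hw1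
  have T2 : (∫ x : ℝ × ℝ, |cSnd w x * pdS (0,1) (cFst v) x * cFst w x|)
      ≤ 2 * Real.sqrt (W * D) * Real.sqrt (A2 * M) * W :=
    keyL_bound _ _ _ W D A2 M W hw2 hddiv hp21 hm3 hw1
  have T3 : (∫ x : ℝ × ℝ, |pdS (1,0) (cSnd v) x * cFst w x * cSnd w x|)
      ≤ 2 * Real.sqrt (A1 * M) * Real.sqrt (W * D) * W :=
    keyL_bound _ _ _ A1 M W D W hp12 hm2 hw1 hd1 hw2
  have T4 : (∫ x : ℝ × ℝ, |cSnd w x * pdS (0,1) (cSnd v) x * cSnd w x|)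
      ≤ 2 * Real.sqrt (W * D) * Real.sqrt (A2 * M) * W :=
    keyL_bound _ _ _ W D A2 M W hw2 hddiv hp22 hm4 hw2
  have total := habs.trans (add_le_add (add_le_add (add_le_add T1 T2) T3) T4)
  refine total.trans (le_of_eq ?_)
  have halg := alg A1 A2 M W D hA1n hA2n hMn hWn hDn
  calc 2 * Real.sqrt (A1 * M) * Real.sqrt (W * D) * W
        + 2 * Real.sqrt (W * D) * Real.sqrt (A2 * M) * W
        + 2 * Real.sqrt (A1 * M) * Real.sqrt (W * D) * W
        + 2 * Real.sqrt (W * D) * Real.sqrt (A2 * M) * W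
      = 4 * ((Real.sqrt (A1 * M) + Real.sqrt (A2 * M)) * Real.sqrt (W * D) * W) := by ring
    _ = 4 * ((A1 ^ ((1:ℝ)/2) + A2 ^ ((1:ℝ)/2)) * M ^ ((1:ℝ)/2) * W ^ ((3:ℝ)/2)
          * D ^ ((1:ℝ)/2)) := by rw [halg]
    _ = 4 * (A1 ^ ((1:ℝ)/2) + A2 ^ ((1:ℝ)/2)) * M ^ ((1:ℝ)/2) * W ^ ((3:ℝ)/2)
          * D ^ ((1:ℝ)/2) := by ring
end

section
/- There exists a constant C > 0 such that for all smooth divergence-free vector fields φ, ψ, v : 𝕋² → ℝ², |∫_{𝕋²} ( φ·∇φ − ψ·∇ψ ) · v dx| ≤ C ‖φ−ψ‖_{H^{1,0}} ( ‖φ‖_{H^{1,0}} + ‖ψ‖_{H^{1,0}} ) ‖v‖_{H^{1,1}}. -/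
open MeasureTheory Real

/-- The fundamental cell of the torus `𝕋² = (ℝ/2πℤ)²`. -/
noncomputable def Q2 : Set (ℝ × ℝ) :=
  (Set.Ioc (0:ℝ) (2 * Real.pi)) ×ˢ (Set.Ioc (0:ℝ) (2 * Real.pi))

/-- A function on `ℝ²` is `2π`-periodic in each variable (i.e. it is a function on `𝕋²`). -/
def PeriodicT {E : Type*} (g : ℝ × ℝ → E) : Prop :=
  ∀ x : ℝ × ℝ, g (x.1 + 2 * Real.pi, x.2) = g x ∧ g (x.1, x.2 + 2 * Real.pi) = g x

/-- The `L²(𝕋²)` inner product of two vector fields. -/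
noncomputable def innerT (g h : ℝ × ℝ → ℝ × ℝ) : ℝ := ∫ x in Q2, pdot (g x) (h x)

/-- The `L²(𝕋²)` norm of a vector field. -/
noncomputable def L2T (g : ℝ × ℝ → ℝ × ℝ) : ℝ := Real.sqrt (∫ x in Q2, pdot (g x) (g x))

/-- The squared anisotropic norm `‖g‖_{H^{1,0}}²` on `𝕋²`. -/
noncomputable def H10sqT (g : ℝ × ℝ → ℝ × ℝ) : ℝ := L2T g ^ 2 + L2T (pd1 g) ^ 2

/-- The squared anisotropic norm `‖g‖_{H^{1,1}}²` on `𝕋²`. -/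
noncomputable def H11sqT (g : ℝ × ℝ → ℝ × ℝ) : ℝ :=
  L2T g ^ 2 + L2T (pd1 g) ^ 2 + L2T (pd2 g) ^ 2 + L2T (pd1 (pd2 g)) ^ 2


noncomputable def tp : ℝ := 2 * Real.pi
lemma tp_pos : 0 < tp := by simp [tp]; positivity
noncomputable def S : Set (ℝ) := Set.Ioc 0 tp
section calculusHelpers
variable {E : Type*} [NormedAddCommGroup E] [NormedSpace ℝ E]

lemma hasDerivAt_line1 (F : ℝ × ℝ → E) (hF : Differentiable ℝ F) (a b : ℝ) :
    HasDerivAt (fun t => F (t, b)) (pd1 F (a, b)) a := by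
  have hc : HasDerivAt (fun t : ℝ => (t, b)) ((1 : ℝ), (0 : ℝ)) a :=
    (hasDerivAt_id a).prodMk (hasDerivAt_const a b)
  exact (hF (a, b)).hasFDerivAt.comp_hasDerivAt a hc

lemma hasDerivAt_line2 (F : ℝ × ℝ → E) (hF : Differentiable ℝ F) (a b : ℝ) :
    HasDerivAt (fun t => F (a, t)) (pd2 F (a, b)) b := by
  have hc : HasDerivAt (fun t : ℝ => (a, t)) ((0 : ℝ), (1 : ℝ)) b :=
    (hasDerivAt_const b a).prodMk (hasDerivAt_id b)
  exact (hF (a, b)).hasFDerivAt.comp_hasDerivAt b hc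

lemma contDiff_pd1 (F : ℝ × ℝ → E) (hF : ContDiff ℝ (⊤ : ℕ∞) F) :
    ContDiff ℝ (⊤ : ℕ∞) (pd1 F) :=
  (hF.fderiv_right (m := (⊤ : ℕ∞)) (by exact_mod_cast le_top)).clm_apply contDiff_const

lemma contDiff_pd2 (F : ℝ × ℝ → E) (hF : ContDiff ℝ (⊤ : ℕ∞) F) :
    ContDiff ℝ (⊤ : ℕ∞) (pd2 F) :=
  (hF.fderiv_right (m := (⊤ : ℕ∞)) (by exact_mod_cast le_top)).clm_apply contDiff_const

lemma fderiv_shift (F : ℝ × ℝ → E) (hF : Differentiable ℝ F) (c : ℝ × ℝ)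
    (hper : ∀ x, F (x + c) = F x) (x : ℝ × ℝ) :
    fderiv ℝ F (x + c) = fderiv ℝ F x := by
  have h1 : HasFDerivAt (fun y : ℝ × ℝ => F (y + c)) (fderiv ℝ F (x + c)) x := by
    have hc : HasFDerivAt (fun y : ℝ × ℝ => y + c)
        (ContinuousLinearMap.id ℝ (ℝ × ℝ)) x := (hasFDerivAt_id x).add_const c
    have := (hF (x + c)).hasFDerivAt.comp x hc
    exact this
  have h2 : HasFDerivAt F (fderiv ℝ F (x + c)) x := by
    have : (fun y : ℝ × ℝ => F (y + c)) = F := funext hper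
    rwa [this] at h1
  exact h2.fderiv.symm

lemma periodicT_iff_shift {F : ℝ × ℝ → E} (hper : PeriodicT F) :
    (∀ x, F (x + ((tp : ℝ), (0 : ℝ))) = F x) ∧ (∀ x, F (x + ((0 : ℝ), (tp : ℝ))) = F x) := by
  constructor <;> intro x
  · rw [show x + ((tp : ℝ), (0 : ℝ)) = (x.1 + 2 * Real.pi, x.2) from Prod.ext (by simp [tp]) (by simp)]
    exact (hper x).1
  · rw [show x + ((0 : ℝ), (tp : ℝ)) = (x.1, x.2 + 2 * Real.pi) from Prod.ext (by simp) (by simp [tp])]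
    exact (hper x).2

lemma periodicT_pd1 (F : ℝ × ℝ → E) (hF : Differentiable ℝ F) (hper : PeriodicT F) :
    PeriodicT (pd1 F) := by
  intro x
  obtain ⟨h1, h2⟩ := periodicT_iff_shift hper
  constructor
  · have := fderiv_shift F hF _ h1 x
    simp only [pd1]
    rw [show ((x.1 + 2 * Real.pi, x.2) : ℝ × ℝ) = x + ((tp : ℝ), (0 : ℝ)) by
      simp [tp, Prod.ext_iff], this]
  · have := fderiv_shift F hF _ h2 x
    simp only [pd1]
    rw [show ((x.1, x.2 + 2 * Real.pi) : ℝ × ℝ) = x + ((0 : ℝ), (tp : ℝ)) by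
      simp [tp, Prod.ext_iff], this]

lemma periodicT_pd2 (F : ℝ × ℝ → E) (hF : Differentiable ℝ F) (hper : PeriodicT F) :
    PeriodicT (pd2 F) := by
  intro x
  obtain ⟨h1, h2⟩ := periodicT_iff_shift hper
  constructor
  · have := fderiv_shift F hF _ h1 x
    simp only [pd2]
    rw [show ((x.1 + 2 * Real.pi, x.2) : ℝ × ℝ) = x + ((tp : ℝ), (0 : ℝ)) by
      simp [tp, Prod.ext_iff], this]
  · have := fderiv_shift F hF _ h2 x
    simp only [pd2]
    rw [show ((x.1, x.2 + 2 * Real.pi) : ℝ × ℝ) = x + ((0 : ℝ), (tp : ℝ)) by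
      simp [tp, Prod.ext_iff], this]

lemma pd1_comp_clm (u : ℝ × ℝ → ℝ × ℝ) (hu : Differentiable ℝ u) (e : (ℝ × ℝ) →L[ℝ] ℝ)
    (x : ℝ × ℝ) : pd1 (fun y => e (u y)) x = e (pd1 u x) := by
  have h : HasFDerivAt (fun y => e (u y)) (e.comp (fderiv ℝ u x)) x :=
    e.hasFDerivAt.comp x (hu x).hasFDerivAt
  simp [pd1, h.fderiv]

lemma pd2_comp_clm (u : ℝ × ℝ → ℝ × ℝ) (hu : Differentiable ℝ u) (e : (ℝ × ℝ) →L[ℝ] ℝ)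
    (x : ℝ × ℝ) : pd2 (fun y => e (u y)) x = e (pd2 u x) := by
  have h : HasFDerivAt (fun y => e (u y)) (e.comp (fderiv ℝ u x)) x :=
    e.hasFDerivAt.comp x (hu x).hasFDerivAt
  simp [pd2, h.fderiv]

lemma pd1_fst (u : ℝ × ℝ → ℝ × ℝ) (hu : Differentiable ℝ u) (x : ℝ × ℝ) :
    pd1 (fun y => (u y).1) x = (pd1 u x).1 :=
  pd1_comp_clm u hu (ContinuousLinearMap.fst ℝ ℝ ℝ) x

lemma pd1_snd (u : ℝ × ℝ → ℝ × ℝ) (hu : Differentiable ℝ u) (x : ℝ × ℝ) :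
    pd1 (fun y => (u y).2) x = (pd1 u x).2 :=
  pd1_comp_clm u hu (ContinuousLinearMap.snd ℝ ℝ ℝ) x

lemma pd2_fst (u : ℝ × ℝ → ℝ × ℝ) (hu : Differentiable ℝ u) (x : ℝ × ℝ) :
    pd2 (fun y => (u y).1) x = (pd2 u x).1 :=
  pd2_comp_clm u hu (ContinuousLinearMap.fst ℝ ℝ ℝ) x

lemma pd2_snd (u : ℝ × ℝ → ℝ × ℝ) (hu : Differentiable ℝ u) (x : ℝ × ℝ) :
    pd2 (fun y => (u y).2) x = (pd2 u x).2 :=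
  pd2_comp_clm u hu (ContinuousLinearMap.snd ℝ ℝ ℝ) x

lemma pd1_sub (f g : ℝ × ℝ → ℝ) (hf : Differentiable ℝ f) (hg : Differentiable ℝ g)
    (x : ℝ × ℝ) : pd1 (fun y => f y - g y) x = pd1 f x - pd1 g x := by
  simp [pd1, fderiv_fun_sub (hf x) (hg x)]

lemma pd2_sub (f g : ℝ × ℝ → ℝ) (hf : Differentiable ℝ f) (hg : Differentiable ℝ g)
    (x : ℝ × ℝ) : pd2 (fun y => f y - g y) x = pd2 f x - pd2 g x := by
  simp [pd2, fderiv_fun_sub (hf x) (hg x)]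

lemma pd2_mul (f g : ℝ × ℝ → ℝ) (hf : Differentiable ℝ f) (hg : Differentiable ℝ g)
    (x : ℝ × ℝ) : pd2 (fun y => f y * g y) x = pd2 f x * g x + f x * pd2 g x := by
  simp only [pd2, fderiv_fun_mul (hf x) (hg x)]
  simp only [ContinuousLinearMap.add_apply, ContinuousLinearMap.smul_apply, smul_eq_mul]
  ring


end calculusHelpers
-- integrability on rectangles
lemma intOnRect (F : ℝ × ℝ → ℝ) (hF : Continuous F) (a b c d : ℝ) :
    IntegrableOn F (Set.Ioc a b ×ˢ Set.Ioc c d) := by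
  have h := hF.integrableOn_Icc (μ := (volume : Measure (ℝ × ℝ))) (a := ((a, c) : ℝ × ℝ)) (b := ((b, d) : ℝ × ℝ))
  refine h.mono_set ?_
  rintro ⟨x, y⟩ ⟨hx, hy⟩
  exact ⟨⟨hx.1.le, hy.1.le⟩, ⟨hx.2, hy.2⟩⟩

lemma intOnQ (F : ℝ × ℝ → ℝ) (hF : Continuous F) : IntegrableOn F (S ×ˢ S) :=
  intOnRect F hF 0 tp 0 tp

-- Fubini, standard order (outer = first variable)
lemma fub1 (F : ℝ × ℝ → ℝ) (hF : Continuous F) (a b c d : ℝ) :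
    ∫ z in Set.Ioc a b ×ˢ Set.Ioc c d, F z
      = ∫ x in Set.Ioc a b, ∫ y in Set.Ioc c d, F (x, y) := by
  have h := intOnRect F hF a b c d
  rw [Measure.volume_eq_prod] at h ⊢
  exact setIntegral_prod F h

-- Fubini, swapped order (outer = second variable)
lemma fub2 (F : ℝ × ℝ → ℝ) (hF : Continuous F) (a b c d : ℝ) :
    ∫ z in Set.Ioc a b ×ˢ Set.Ioc c d, F z
      = ∫ y in Set.Ioc c d, ∫ x in Set.Ioc a b, F (x, y) := by
  have h := intOnRect F hF a b c d
  rw [Measure.volume_eq_prod] at h ⊢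
  rw [← Measure.prod_restrict]
  exact integral_prod_symm F (by rwa [Measure.prod_restrict])

-- 1D FTC-average lemma
lemma L0 (g g' : ℝ → ℝ) (hd : ∀ t, HasDerivAt g (g' t) t) (hc : Continuous g)
    (hc' : Continuous g') (hp : ∀ t, g (t + tp) = g t) (y : ℝ) :
    g y ≤ (1 / tp) * (∫ t in S, g t) + ∫ t in S, |g' t| := by
  have hper : Function.Periodic g tp := hp
  have hper' : Function.Periodic g' tp := by
    intro t
    have h1 : HasDerivAt g (g' (t + tp)) t := by
      have h0 : HasDerivAt (fun s => g (s + tp)) (g' (t + tp)) t := by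
        exact ((hd (t + tp)).comp t ((hasDerivAt_id t).add_const tp)).congr_deriv (mul_one _)
      have : (fun s => g (s + tp)) = g := funext hp
      rwa [this] at h0
    exact h1.unique (hd t)
  set D : ℝ := ∫ s in Set.Ioc (y - tp) y, |g' s| with hD
  have hDeq : D = ∫ s in S, |g' s| := by
    have habs : Function.Periodic (fun s => |g' s|) tp := fun s => by simp [hper' s]
    have h1 : ∫ s in Set.Ioc (y - tp) y, |g' s| = ∫ s in (y - tp)..y, |g' s| :=
      (intervalIntegral.integral_of_le (by linarith [tp_pos])).symm
    have h2 : ∫ s in S, |g' s| = ∫ s in (0:ℝ)..tp, |g' s| :=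
      (intervalIntegral.integral_of_le tp_pos.le).symm
    rw [hD, h1, h2]
    have := habs.intervalIntegral_add_eq (y - tp) 0
    simpa using this
  have key : ∀ t ∈ Set.Ioc (y - tp) y, g y ≤ g t + D := by
    intro t ht
    have ftc : ∫ s in t..y, g' s = g y - g t :=
      intervalIntegral.integral_eq_sub_of_hasDerivAt (fun s _ => hd s)
        (hc'.intervalIntegrable t y)
    have h1 : ∫ s in t..y, g' s ≤ ∫ s in t..y, |g' s| := by
      apply intervalIntegral.integral_mono_on ht.2 (hc'.intervalIntegrable t y)
        (hc'.abs.intervalIntegrable t y)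
      intro s _; exact le_abs_self _
    have h2 : ∫ s in t..y, |g' s| ≤ D := by
      rw [intervalIntegral.integral_of_le ht.2, hD]
      apply setIntegral_mono_set ((hc'.abs.integrableOn_Ioc))
        (Filter.Eventually.of_forall fun s => abs_nonneg _)
      apply Filter.Eventually.of_forall
      intro s hs
      exact ⟨by linarith [ht.1, hs.1], hs.2⟩
    linarith [ftc, h1, h2]
  -- integrate key over t
  have hmeas : MeasurableSet (Set.Ioc (y - tp) y) := measurableSet_Ioc
  have hint1 : IntegrableOn (fun _ : ℝ => g y) (Set.Ioc (y - tp) y) := by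
    simp [integrableOn_const, Real.volume_Ioc]
  have hint2 : IntegrableOn (fun t => g t + D) (Set.Ioc (y - tp) y) :=
    (hc.integrableOn_Ioc).add (integrableOn_const (by
      rw [Real.volume_Ioc]; exact ENNReal.ofReal_ne_top))
  have hmono := setIntegral_mono_on hint1 hint2 hmeas key
  rw [setIntegral_const, measureReal_def, Real.volume_Ioc] at hmono
  have hvol : (ENNReal.ofReal (y - (y - tp))).toReal = tp := by
    rw [show y - (y - tp) = tp by ring, ENNReal.toReal_ofReal tp_pos.le]
  rw [hvol] at hmono
  have hshift : ∫ t in Set.Ioc (y - tp) y, g t = ∫ t in S, g t := by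
    have h1 : ∫ t in Set.Ioc (y - tp) y, g t = ∫ t in (y - tp)..y, g t :=
      (intervalIntegral.integral_of_le (by linarith [tp_pos])).symm
    have h2 : ∫ t in S, g t = ∫ t in (0:ℝ)..tp, g t :=
      (intervalIntegral.integral_of_le tp_pos.le).symm
    rw [h1, h2]
    have := hper.intervalIntegral_add_eq (y - tp) 0
    simpa using this
  have hsum : ∫ t in Set.Ioc (y - tp) y, (g t + D)
      = (∫ t in S, g t) + tp * D := by
    rw [integral_add (hc.integrableOn_Ioc) (integrableOn_const (by
      rw [Real.volume_Ioc]; exact ENNReal.ofReal_ne_top))]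
    rw [hshift, setIntegral_const, measureReal_def, Real.volume_Ioc, hvol, smul_eq_mul]
  rw [hsum] at hmono
  have htp := tp_pos
  rw [hDeq, smul_eq_mul] at hmono
  calc g y = (tp * g y) / tp := by field_simp
    _ ≤ ((∫ t in S, g t) + tp * ∫ t in S, |g' t|) / tp := by
        exact div_le_div_of_nonneg_right hmono htp.le |>.trans_eq rfl
    _ = (1 / tp) * (∫ t in S, g t) + ∫ t in S, |g' t| := by
        field_simp

lemma myCS {α : Type*} [MeasurableSpace α] (μ : Measure α) (f g : α → ℝ)
    (hf : Integrable (fun x => f x ^ 2) μ) (hg : Integrable (fun x => g x ^ 2) μ)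
    (hfg : Integrable (fun x => |f x * g x|) μ) :
    ∫ x, |f x * g x| ∂μ ≤ Real.sqrt (∫ x, f x ^ 2 ∂μ) * Real.sqrt (∫ x, g x ^ 2 ∂μ) := by
  set A := ∫ x, f x ^ 2 ∂μ with hA'
  set B := ∫ x, g x ^ 2 ∂μ with hB'
  have hA : 0 ≤ A := integral_nonneg fun x => sq_nonneg _
  have hB : 0 ≤ B := integral_nonneg fun x => sq_nonneg _
  have step : ∀ ε : ℝ, 0 < ε →
      ∫ x, |f x * g x| ∂μ ≤ (Real.sqrt A + ε) * (Real.sqrt B + ε) := by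
    intro ε hε
    set a := Real.sqrt A + ε with ha'
    set b := Real.sqrt B + ε with hb'
    have ha : 0 < a := add_pos_of_nonneg_of_pos (Real.sqrt_nonneg _) hε
    have hb : 0 < b := add_pos_of_nonneg_of_pos (Real.sqrt_nonneg _) hε
    have hA2 : A ≤ a ^ 2 := by
      have h1 : Real.sqrt A ≤ a := by simp [ha', hε.le]
      calc A = Real.sqrt A ^ 2 := (Real.sq_sqrt hA).symm
        _ ≤ a ^ 2 := by nlinarith [Real.sqrt_nonneg A]
    have hB2 : B ≤ b ^ 2 := by
      have h1 : Real.sqrt B ≤ b := by simp [hb', hε.le]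
      calc B = Real.sqrt B ^ 2 := (Real.sq_sqrt hB).symm
        _ ≤ b ^ 2 := by nlinarith [Real.sqrt_nonneg B]
    have hpt : ∀ x, 2 * a * b * |f x * g x| ≤ b ^ 2 * f x ^ 2 + a ^ 2 * g x ^ 2 := by
      intro x
      rw [abs_mul]
      nlinarith [sq_nonneg (b * |f x| - a * |g x|), sq_abs (f x), sq_abs (g x)]
    have hint : ∫ x, 2 * a * b * |f x * g x| ∂μ
        ≤ ∫ x, (b ^ 2 * f x ^ 2 + a ^ 2 * g x ^ 2) ∂μ :=
      integral_mono (hfg.const_mul _) ((hf.const_mul _).add (hg.const_mul _)) hpt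
    rw [integral_const_mul, integral_add (hf.const_mul _) (hg.const_mul _),
      integral_const_mul, integral_const_mul] at hint
    have hfin : 2 * a * b * ∫ x, |f x * g x| ∂μ ≤ 2 * a * b * (a * b) := by
      have e1 : b ^ 2 * A ≤ b ^ 2 * a ^ 2 := mul_le_mul_of_nonneg_left hA2 (sq_nonneg b)
      have e2 : a ^ 2 * B ≤ a ^ 2 * b ^ 2 := mul_le_mul_of_nonneg_left hB2 (sq_nonneg a)
      nlinarith [hint]
    have h2ab : 0 < 2 * a * b := by positivity
    exact le_of_mul_le_mul_left (by linarith [hfin]) h2ab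
  refine le_of_forall_pos_le_add ?_
  intro δ hδ
  set M := Real.sqrt A + Real.sqrt B + 1 with hM'
  have hM : 0 < M := by positivity
  set ε := min 1 (δ / M) with hε'
  have hε : 0 < ε := lt_min one_pos (div_pos hδ hM)
  have h1 := step ε hε
  have hε1 : ε ≤ 1 := min_le_left _ _
  have hε2 : ε ≤ δ / M := min_le_right _ _
  have h3 : ε * M ≤ δ := by
    calc ε * M ≤ (δ / M) * M := mul_le_mul_of_nonneg_right hε2 hM.le
      _ = δ := div_mul_cancel₀ δ hM.ne'
  have h2 : (Real.sqrt A + ε) * (Real.sqrt B + ε) ≤ Real.sqrt A * Real.sqrt B + δ := by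
    nlinarith [Real.sqrt_nonneg A, Real.sqrt_nonneg B, hε.le]
  linarith


lemma fubS1 (F : ℝ × ℝ → ℝ) (hF : Continuous F) :
    ∫ z in S ×ˢ S, F z = ∫ x in S, ∫ y in S, F (x, y) := fub1 F hF 0 tp 0 tp
lemma fubS2 (F : ℝ × ℝ → ℝ) (hF : Continuous F) :
    ∫ z in S ×ˢ S, F z = ∫ y in S, ∫ x in S, F (x, y) := fub2 F hF 0 tp 0 tp

lemma marginal1 (F : ℝ × ℝ → ℝ) (hF : Continuous F) :
    IntegrableOn (fun x => ∫ y in S, F (x, y)) S := by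
  have h : Integrable F ((volume.prod volume).restrict (S ×ˢ S)) := by
    have := intOnQ F hF
    rwa [Measure.volume_eq_prod] at this
  rw [← Measure.prod_restrict] at h
  exact h.integral_prod_left

lemma marginal2 (F : ℝ × ℝ → ℝ) (hF : Continuous F) :
    IntegrableOn (fun y => ∫ x in S, F (x, y)) S := by
  have h : Integrable F ((volume.prod volume).restrict (S ×ˢ S)) := by
    have := intOnQ F hF
    rwa [Measure.volume_eq_prod] at this
  rw [← Measure.prod_restrict] at h
  exact h.integral_prod_right

lemma cont_line1 (F : ℝ × ℝ → ℝ) (hF : Continuous F) (y : ℝ) :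
    Continuous (fun t => F (t, y)) := hF.comp (continuous_id.prodMk continuous_const)
lemma cont_line2 (F : ℝ × ℝ → ℝ) (hF : Continuous F) (x : ℝ) :
    Continuous (fun t => F (x, t)) := hF.comp (continuous_const.prodMk continuous_id)

lemma lineBound1 (f : ℝ × ℝ → ℝ) (hf : ContDiff ℝ (⊤ : ℕ∞) f) (hper : PeriodicT f)
    (x y : ℝ) :
    f (x, y) ^ 2 ≤ (1 / tp) * (∫ t in S, f (t, y) ^ 2)
      + ∫ t in S, |2 * f (t, y) * pd1 f (t, y)| := by
  have hdiff : Differentiable ℝ f := hf.differentiable (by simp)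
  have hf1c : Continuous (pd1 f) := (contDiff_pd1 f hf).continuous
  have hd : ∀ t, HasDerivAt (fun s => f (s, y) ^ 2) (2 * f (t, y) * pd1 f (t, y)) t := by
    intro t
    have := (hasDerivAt_line1 f hdiff t y).pow 2
    exact this.congr_deriv (by norm_num)
  have hc : Continuous (fun t => f (t, y) ^ 2) := (cont_line1 f hf.continuous y).pow 2
  have hc' : Continuous (fun t => 2 * f (t, y) * pd1 f (t, y)) := by
    exact ((continuous_const.mul (cont_line1 f hf.continuous y)).mul
      (cont_line1 (pd1 f) hf1c y))
  have hp : ∀ t, f (t + tp, y) ^ 2 = f (t, y) ^ 2 := by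
    intro t
    exact congrArg (· ^ 2) (hper (t, y)).1
  exact L0 _ _ hd hc hc' hp x

lemma lineBound2 (f : ℝ × ℝ → ℝ) (hf : ContDiff ℝ (⊤ : ℕ∞) f) (hper : PeriodicT f)
    (x y : ℝ) :
    f (x, y) ^ 2 ≤ (1 / tp) * (∫ t in S, f (x, t) ^ 2)
      + ∫ t in S, |2 * f (x, t) * pd2 f (x, t)| := by
  have hdiff : Differentiable ℝ f := hf.differentiable (by simp)
  have hf2c : Continuous (pd2 f) := (contDiff_pd2 f hf).continuous
  have hd : ∀ t, HasDerivAt (fun s => f (x, s) ^ 2) (2 * f (x, t) * pd2 f (x, t)) t := by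
    intro t
    have := (hasDerivAt_line2 f hdiff x t).pow 2
    exact this.congr_deriv (by norm_num)
  have hc : Continuous (fun t => f (x, t) ^ 2) := (cont_line2 f hf.continuous x).pow 2
  have hc' : Continuous (fun t => 2 * f (x, t) * pd2 f (x, t)) := by
    exact ((continuous_const.mul (cont_line2 f hf.continuous x)).mul
      (cont_line2 (pd2 f) hf2c x))
  have hp : ∀ t, f (x, t + tp) ^ 2 = f (x, t) ^ 2 := by
    intro t
    exact congrArg (· ^ 2) (hper (x, t)).2
  exact L0 _ _ hd hc hc' hp y

set_option maxHeartbeats 1000000 in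
lemma colBound (h : ℝ × ℝ → ℝ) (hh : ContDiff ℝ (⊤ : ℕ∞) h) (hper : PeriodicT h) (y : ℝ) :
    ∫ x in S, h (x, y) ^ 2 ≤ (1 / tp) * (∫ z in S ×ˢ S, h z ^ 2)
      + ∫ z in S ×ˢ S, |2 * h z * pd2 h z| := by
  have hc := hh.continuous
  have h2c : Continuous (pd2 h) := (contDiff_pd2 h hh).continuous
  have habs : Continuous (fun z : ℝ × ℝ => |2 * h z * pd2 h z|) :=
    ((continuous_const.mul hc).mul h2c).abs
  have hkey : ∀ x, h (x, y) ^ 2 ≤ (1 / tp) * (∫ t in S, h (x, t) ^ 2)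
      + ∫ t in S, |2 * h (x, t) * pd2 h (x, t)| := fun x => lineBound2 h hh hper x y
  have hi1 : IntegrableOn (fun x => h (x, y) ^ 2) S :=
    ((cont_line1 h hc y).pow 2).integrableOn_Ioc
  have hm1 : IntegrableOn (fun x => ∫ t in S, h (x, t) ^ 2) S :=
    marginal1 (fun z => h z ^ 2) (hc.pow 2)
  have hm2 : IntegrableOn (fun x => ∫ t in S, |2 * h (x, t) * pd2 h (x, t)|) S :=
    marginal1 _ habs
  have hi2 : IntegrableOn (fun x => (1 / tp) * (∫ t in S, h (x, t) ^ 2)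
      + ∫ t in S, |2 * h (x, t) * pd2 h (x, t)|) S := (hm1.const_mul _).add hm2
  have hmono := setIntegral_mono_on hi1 hi2 measurableSet_Ioc (fun x _ => hkey x)
  calc ∫ x in S, h (x, y) ^ 2
      ≤ ∫ x in S, ((1 / tp) * (∫ t in S, h (x, t) ^ 2)
        + ∫ t in S, |2 * h (x, t) * pd2 h (x, t)|) := hmono
    _ = (1 / tp) * (∫ x in S, ∫ t in S, h (x, t) ^ 2)
        + ∫ x in S, ∫ t in S, |2 * h (x, t) * pd2 h (x, t)| := by
        rw [integral_add (hm1.const_mul _) hm2, integral_const_mul]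
    _ = (1 / tp) * (∫ z in S ×ˢ S, h z ^ 2) + ∫ z in S ×ˢ S, |2 * h z * pd2 h z| := by
        rw [fubS1 (fun z => h z ^ 2) (hc.pow 2), fubS1 _ habs]

lemma sqrt_mul_le_add_div_two (a b : ℝ) (ha : 0 ≤ a) (hb : 0 ≤ b) :
    Real.sqrt a * Real.sqrt b ≤ (a + b) / 2 := by
  nlinarith [Real.sq_sqrt ha, Real.sq_sqrt hb, sq_nonneg (Real.sqrt a - Real.sqrt b),
    Real.sqrt_nonneg a, Real.sqrt_nonneg b]
-- 2D Cauchy–Schwarz on the cell, continuous version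
lemma CS2 (f g : ℝ × ℝ → ℝ) (hf : Continuous f) (hg : Continuous g) :
    ∫ z in S ×ˢ S, |f z * g z|
      ≤ Real.sqrt (∫ z in S ×ˢ S, f z ^ 2) * Real.sqrt (∫ z in S ×ˢ S, g z ^ 2) :=
  myCS _ f g (intOnQ _ (hf.pow 2)) (intOnQ _ (hg.pow 2)) (intOnQ _ (hf.mul hg).abs)

-- 1D Cauchy–Schwarz on a line
lemma CS1 (f g : ℝ → ℝ) (hf : Continuous f) (hg : Continuous g) :
    ∫ t in S, |f t * g t|
      ≤ Real.sqrt (∫ t in S, f t ^ 2) * Real.sqrt (∫ t in S, g t ^ 2) :=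
  myCS _ f g ((hf.pow 2).integrableOn_Ioc) ((hg.pow 2).integrableOn_Ioc)
    ((hf.mul hg).abs.integrableOn_Ioc)

set_option maxHeartbeats 1600000 in
lemma TRI (f g h : ℝ × ℝ → ℝ) (hf : ContDiff ℝ (⊤ : ℕ∞) f) (hg : Continuous g)
    (hh : ContDiff ℝ (⊤ : ℕ∞) h) (hpf : PeriodicT f) (hph : PeriodicT h) :
    |∫ z in S ×ˢ S, f z * g z * h z|
      ≤ Real.sqrt (2 * ((∫ z in S ×ˢ S, f z ^ 2) + ∫ z in S ×ˢ S, (pd1 f z) ^ 2))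
        * Real.sqrt (∫ z in S ×ˢ S, g z ^ 2)
        * Real.sqrt (2 * ((∫ z in S ×ˢ S, h z ^ 2) + ∫ z in S ×ˢ S, (pd2 h z) ^ 2)) := by
  have hfc := hf.continuous
  have hhc := hh.continuous
  have hf1c : Continuous (pd1 f) := (contDiff_pd1 f hf).continuous
  have hh2c : Continuous (pd2 h) := (contDiff_pd2 h hh).continuous
  -- the three building blocks
  set FB : ℝ → ℝ := fun y => (1 / tp) * (∫ t in S, f (t, y) ^ 2)
      + ∫ t in S, |2 * f (t, y) * pd1 f (t, y)| with hFB'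
  set Gm : ℝ → ℝ := fun y => ∫ x in S, g (x, y) ^ 2 with hGm'
  set HB : ℝ := (1 / tp) * (∫ z in S ×ˢ S, h z ^ 2)
      + ∫ z in S ×ˢ S, |2 * h z * pd2 h z| with hHB'
  have hFBnn : ∀ y, 0 ≤ FB y := by
    intro y
    have h1 : 0 ≤ ∫ t in S, f (t, y) ^ 2 := setIntegral_nonneg measurableSet_Ioc
      (fun t _ => sq_nonneg _)
    have h2 : 0 ≤ ∫ t in S, |2 * f (t, y) * pd1 f (t, y)| :=
      setIntegral_nonneg measurableSet_Ioc (fun t _ => abs_nonneg _)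
    have := tp_pos
    positivity
  have hGmnn : ∀ y, 0 ≤ Gm y := fun y => setIntegral_nonneg measurableSet_Ioc
      (fun t _ => sq_nonneg _)
  have hHBnn : 0 ≤ HB := by
    have h1 : 0 ≤ ∫ z in S ×ˢ S, h z ^ 2 := setIntegral_nonneg
      (measurableSet_Ioc.prod measurableSet_Ioc) (fun z _ => sq_nonneg _)
    have h2 : 0 ≤ ∫ z in S ×ˢ S, |2 * h z * pd2 h z| := setIntegral_nonneg
      (measurableSet_Ioc.prod measurableSet_Ioc) (fun z _ => abs_nonneg _)
    have := tp_pos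
    positivity
  have hfb : ∀ x y, f (x, y) ^ 2 ≤ FB y := fun x y => lineBound1 f hf hpf x y
  have hhb : ∀ y, ∫ x in S, h (x, y) ^ 2 ≤ HB := fun y => colBound h hh hph y
  -- step 1 : |∫| ≤ ∫ | |
  have step1 : |∫ z in S ×ˢ S, f z * g z * h z| ≤ ∫ z in S ×ˢ S, |f z * g z * h z| := by
    have := norm_integral_le_integral_norm (μ := volume.restrict (S ×ˢ S))
      (fun z => f z * g z * h z)
    simp only [Real.norm_eq_abs] at this
    exact this
  -- step 2 : Fubini
  have habc : Continuous fun z : ℝ × ℝ => |f z * g z * h z| := ((hfc.mul hg).mul hhc).abs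
  have step2 : ∫ z in S ×ˢ S, |f z * g z * h z|
      = ∫ y in S, ∫ x in S, |f (x, y) * g (x, y) * h (x, y)| := fubS2 _ habc
  -- step 3 : inner bound, for every y
  have step3 : ∀ y, ∫ x in S, |f (x, y) * g (x, y) * h (x, y)|
      ≤ Real.sqrt (FB y) * (Real.sqrt (Gm y) * Real.sqrt HB) := by
    intro y
    have hinner1 : ∫ x in S, |f (x, y) * g (x, y) * h (x, y)|
        ≤ ∫ x in S, Real.sqrt (FB y) * |g (x, y) * h (x, y)| := by
      apply setIntegral_mono_on
      · exact (cont_line1 _ habc y).integrableOn_Ioc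
      · exact (continuous_const.mul (cont_line1 _ ((hg.mul hhc).abs) y)).integrableOn_Ioc
      · exact measurableSet_Ioc
      · intro x _
        rw [mul_assoc, abs_mul]
        apply mul_le_mul_of_nonneg_right _ (abs_nonneg _)
        exact Real.abs_le_sqrt (hfb x y)
    have hinner2 : ∫ x in S, Real.sqrt (FB y) * |g (x, y) * h (x, y)|
        = Real.sqrt (FB y) * ∫ x in S, |g (x, y) * h (x, y)| := integral_const_mul _ _
    have hinner3 : ∫ x in S, |g (x, y) * h (x, y)|
        ≤ Real.sqrt (Gm y) * Real.sqrt (∫ x in S, h (x, y) ^ 2) :=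
      CS1 _ _ (cont_line1 g hg y) (cont_line1 h hhc y)
    have hinner4 : Real.sqrt (∫ x in S, h (x, y) ^ 2) ≤ Real.sqrt HB :=
      Real.sqrt_le_sqrt (hhb y)
    calc ∫ x in S, |f (x, y) * g (x, y) * h (x, y)|
        ≤ Real.sqrt (FB y) * ∫ x in S, |g (x, y) * h (x, y)| := by
          rw [← hinner2]; exact hinner1
      _ ≤ Real.sqrt (FB y) * (Real.sqrt (Gm y) * Real.sqrt HB) := by
          apply mul_le_mul_of_nonneg_left _ (Real.sqrt_nonneg _)
          calc ∫ x in S, |g (x, y) * h (x, y)|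
              ≤ Real.sqrt (Gm y) * Real.sqrt (∫ x in S, h (x, y) ^ 2) := hinner3
            _ ≤ Real.sqrt (Gm y) * Real.sqrt HB :=
                mul_le_mul_of_nonneg_left hinner4 (Real.sqrt_nonneg _)
  -- integrability
  have habsf : Continuous (fun z : ℝ × ℝ => |2 * f z * pd1 f z|) :=
    ((continuous_const.mul hfc).mul hf1c).abs
  have hFBi : IntegrableOn FB S :=
    ((marginal2 (fun z => f z ^ 2) (hfc.pow 2)).const_mul _).add (marginal2 _ habsf)
  have hGmi : IntegrableOn Gm S := marginal2 (fun z => g z ^ 2) (hg.pow 2)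
  -- step 4 : outer integral bound
  have g2meas : AEStronglyMeasurable (fun y => Real.sqrt (FB y) * Real.sqrt (Gm y))
      (volume.restrict S) :=
    (Real.continuous_sqrt.comp_aestronglyMeasurable hFBi.1).mul
      (Real.continuous_sqrt.comp_aestronglyMeasurable hGmi.1)
  have g2bound : ∀ y, |Real.sqrt (FB y) * Real.sqrt (Gm y)| ≤ (FB y + Gm y) / 2 := by
    intro y
    rw [abs_of_nonneg (mul_nonneg (Real.sqrt_nonneg _) (Real.sqrt_nonneg _))]
    exact sqrt_mul_le_add_div_two _ _ (hFBnn y) (hGmnn y)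
  have g2int : Integrable (fun y => Real.sqrt (FB y) * Real.sqrt (Gm y))
      (volume.restrict S) := by
    apply Integrable.mono' ((hFBi.add hGmi).div_const 2) g2meas
    exact Filter.Eventually.of_forall (fun y => (Real.norm_eq_abs _).le.trans (g2bound y))
  have step4 : ∫ y in S, ∫ x in S, |f (x, y) * g (x, y) * h (x, y)|
      ≤ Real.sqrt HB * ∫ y in S, Real.sqrt (FB y) * Real.sqrt (Gm y) := by
    have hmono := setIntegral_mono_on (marginal2 _ habc)
      ((g2int.mul_const (Real.sqrt HB))) measurableSet_Ioc
      (fun y _ => by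
        have := step3 y
        calc ∫ x in S, |f (x, y) * g (x, y) * h (x, y)|
            ≤ Real.sqrt (FB y) * (Real.sqrt (Gm y) * Real.sqrt HB) := this
          _ = Real.sqrt (FB y) * Real.sqrt (Gm y) * Real.sqrt HB := by ring)
    calc ∫ y in S, ∫ x in S, |f (x, y) * g (x, y) * h (x, y)|
        ≤ ∫ y in S, (Real.sqrt (FB y) * Real.sqrt (Gm y) * Real.sqrt HB) := hmono
      _ = (∫ y in S, Real.sqrt (FB y) * Real.sqrt (Gm y)) * Real.sqrt HB :=
          integral_mul_const _ _
      _ = Real.sqrt HB * ∫ y in S, Real.sqrt (FB y) * Real.sqrt (Gm y) := by ring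
  -- step 5 : Cauchy-Schwarz in y
  have step5 : ∫ y in S, Real.sqrt (FB y) * Real.sqrt (Gm y)
      ≤ Real.sqrt (∫ y in S, FB y) * Real.sqrt (∫ y in S, Gm y) := by
    have e1 : Integrable (fun y => Real.sqrt (FB y) ^ 2) (volume.restrict S) := by
      apply hFBi.congr
      exact Filter.Eventually.of_forall (fun y => (Real.sq_sqrt (hFBnn y)).symm)
    have e2 : Integrable (fun y => Real.sqrt (Gm y) ^ 2) (volume.restrict S) := by
      apply hGmi.congr
      exact Filter.Eventually.of_forall (fun y => (Real.sq_sqrt (hGmnn y)).symm)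
    have := myCS (volume.restrict S) (fun y => Real.sqrt (FB y))
      (fun y => Real.sqrt (Gm y)) e1 e2 g2int.abs
    have eabs : ∫ y in S, |Real.sqrt (FB y) * Real.sqrt (Gm y)|
        = ∫ y in S, Real.sqrt (FB y) * Real.sqrt (Gm y) := by
      apply integral_congr_ae
      exact Filter.Eventually.of_forall (fun y =>
        abs_of_nonneg (mul_nonneg (Real.sqrt_nonneg _) (Real.sqrt_nonneg _)))
    have eF : ∫ y in S, Real.sqrt (FB y) ^ 2 = ∫ y in S, FB y := by
      apply integral_congr_ae
      exact Filter.Eventually.of_forall (fun y => Real.sq_sqrt (hFBnn y))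
    have eG : ∫ y in S, Real.sqrt (Gm y) ^ 2 = ∫ y in S, Gm y := by
      apply integral_congr_ae
      exact Filter.Eventually.of_forall (fun y => Real.sq_sqrt (hGmnn y))
    rw [eabs, eF, eG] at this
    exact this
  -- step 6 : identify/bound the integrals of FB, Gm, HB
  have tp_ge_one : (1:ℝ) ≤ tp := by
    have := Real.pi_gt_three
    simp only [tp]
    linarith
  have inv_tp_le_one : (1:ℝ) / tp ≤ 1 := by
    rw [div_le_one tp_pos]
    exact tp_ge_one
  have crossF : ∫ z in S ×ˢ S, |2 * f z * pd1 f z|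
      ≤ (∫ z in S ×ˢ S, f z ^ 2) + ∫ z in S ×ˢ S, (pd1 f z) ^ 2 := by
    have e1 : ∫ z in S ×ˢ S, |2 * f z * pd1 f z| = 2 * ∫ z in S ×ˢ S, |f z * pd1 f z| := by
      rw [← integral_const_mul]
      apply integral_congr_ae
      exact Filter.Eventually.of_forall (fun z => by simp [abs_mul, mul_assoc])
    have e2 := CS2 f (pd1 f) hfc hf1c
    have aF : 0 ≤ ∫ z in S ×ˢ S, f z ^ 2 := setIntegral_nonneg
      (measurableSet_Ioc.prod measurableSet_Ioc) (fun z _ => sq_nonneg _)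
    have aF1 : 0 ≤ ∫ z in S ×ˢ S, (pd1 f z) ^ 2 := setIntegral_nonneg
      (measurableSet_Ioc.prod measurableSet_Ioc) (fun z _ => sq_nonneg _)
    rw [e1]
    nlinarith [Real.sq_sqrt aF, Real.sq_sqrt aF1, Real.sqrt_nonneg (∫ z in S ×ˢ S, f z ^ 2),
      Real.sqrt_nonneg (∫ z in S ×ˢ S, (pd1 f z) ^ 2),
      sq_nonneg (Real.sqrt (∫ z in S ×ˢ S, f z ^ 2) - Real.sqrt (∫ z in S ×ˢ S, (pd1 f z) ^ 2))]
  have crossH : ∫ z in S ×ˢ S, |2 * h z * pd2 h z|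
      ≤ (∫ z in S ×ˢ S, h z ^ 2) + ∫ z in S ×ˢ S, (pd2 h z) ^ 2 := by
    have e1 : ∫ z in S ×ˢ S, |2 * h z * pd2 h z| = 2 * ∫ z in S ×ˢ S, |h z * pd2 h z| := by
      rw [← integral_const_mul]
      apply integral_congr_ae
      exact Filter.Eventually.of_forall (fun z => by simp [abs_mul, mul_assoc])
    have e2 := CS2 h (pd2 h) hhc hh2c
    have aH : 0 ≤ ∫ z in S ×ˢ S, h z ^ 2 := setIntegral_nonneg
      (measurableSet_Ioc.prod measurableSet_Ioc) (fun z _ => sq_nonneg _)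
    have aH2 : 0 ≤ ∫ z in S ×ˢ S, (pd2 h z) ^ 2 := setIntegral_nonneg
      (measurableSet_Ioc.prod measurableSet_Ioc) (fun z _ => sq_nonneg _)
    rw [e1]
    nlinarith [Real.sq_sqrt aH, Real.sq_sqrt aH2, Real.sqrt_nonneg (∫ z in S ×ˢ S, h z ^ 2),
      Real.sqrt_nonneg (∫ z in S ×ˢ S, (pd2 h z) ^ 2),
      sq_nonneg (Real.sqrt (∫ z in S ×ˢ S, h z ^ 2) - Real.sqrt (∫ z in S ×ˢ S, (pd2 h z) ^ 2))]
  have aF : 0 ≤ ∫ z in S ×ˢ S, f z ^ 2 := setIntegral_nonneg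
    (measurableSet_Ioc.prod measurableSet_Ioc) (fun z _ => sq_nonneg _)
  have aH : 0 ≤ ∫ z in S ×ˢ S, h z ^ 2 := setIntegral_nonneg
    (measurableSet_Ioc.prod measurableSet_Ioc) (fun z _ => sq_nonneg _)
  have intFB : ∫ y in S, FB y ≤ 2 * ((∫ z in S ×ˢ S, f z ^ 2) + ∫ z in S ×ˢ S, (pd1 f z) ^ 2) := by
    have e0 : ∫ y in S, FB y = (1 / tp) * (∫ y in S, ∫ t in S, f (t, y) ^ 2)
        + ∫ y in S, ∫ t in S, |2 * f (t, y) * pd1 f (t, y)| := by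
      rw [hFB']
      rw [integral_add ((marginal2 (fun z => f z ^ 2) (hfc.pow 2)).const_mul _)
        (marginal2 _ habsf), integral_const_mul]
    have e1 : ∫ y in S, ∫ t in S, f (t, y) ^ 2 = ∫ z in S ×ˢ S, f z ^ 2 :=
      (fubS2 (fun z => f z ^ 2) (hfc.pow 2)).symm
    have e2 : ∫ y in S, ∫ t in S, |2 * f (t, y) * pd1 f (t, y)|
        = ∫ z in S ×ˢ S, |2 * f z * pd1 f z| := (fubS2 _ habsf).symm
    rw [e0, e1, e2]
    have h1 : (1 / tp) * (∫ z in S ×ˢ S, f z ^ 2) ≤ ∫ z in S ×ˢ S, f z ^ 2 := by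
      nlinarith [inv_tp_le_one, aF, tp_pos]
    have aF1 : 0 ≤ ∫ z in S ×ˢ S, (pd1 f z) ^ 2 := setIntegral_nonneg
      (measurableSet_Ioc.prod measurableSet_Ioc) (fun z _ => sq_nonneg _)
    linarith [crossF]
  have intHB : HB ≤ 2 * ((∫ z in S ×ˢ S, h z ^ 2) + ∫ z in S ×ˢ S, (pd2 h z) ^ 2) := by
    rw [hHB']
    have h1 : (1 / tp) * (∫ z in S ×ˢ S, h z ^ 2) ≤ ∫ z in S ×ˢ S, h z ^ 2 := by
      nlinarith [inv_tp_le_one, aH, tp_pos]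
    have aH2 : 0 ≤ ∫ z in S ×ˢ S, (pd2 h z) ^ 2 := setIntegral_nonneg
      (measurableSet_Ioc.prod measurableSet_Ioc) (fun z _ => sq_nonneg _)
    linarith [crossH]
  have intGm : ∫ y in S, Gm y = ∫ z in S ×ˢ S, g z ^ 2 :=
    (fubS2 (fun z => g z ^ 2) (hg.pow 2)).symm
  -- final assembly
  have hFBint_nn : 0 ≤ ∫ y in S, FB y := integral_nonneg (fun y => hFBnn y)
  have hGmint_nn : 0 ≤ ∫ y in S, Gm y := integral_nonneg (fun y => hGmnn y)
  calc |∫ z in S ×ˢ S, f z * g z * h z|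
      ≤ ∫ z in S ×ˢ S, |f z * g z * h z| := step1
    _ = ∫ y in S, ∫ x in S, |f (x, y) * g (x, y) * h (x, y)| := step2
    _ ≤ Real.sqrt HB * ∫ y in S, Real.sqrt (FB y) * Real.sqrt (Gm y) := step4
    _ ≤ Real.sqrt HB * (Real.sqrt (∫ y in S, FB y) * Real.sqrt (∫ y in S, Gm y)) :=
        mul_le_mul_of_nonneg_left step5 (Real.sqrt_nonneg _)
    _ ≤ Real.sqrt (2 * ((∫ z in S ×ˢ S, h z ^ 2) + ∫ z in S ×ˢ S, (pd2 h z) ^ 2))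
        * (Real.sqrt (2 * ((∫ z in S ×ˢ S, f z ^ 2) + ∫ z in S ×ˢ S, (pd1 f z) ^ 2))
          * Real.sqrt (∫ z in S ×ˢ S, g z ^ 2)) := by
        rw [← intGm]
        apply mul_le_mul
        · exact Real.sqrt_le_sqrt intHB
        · apply mul_le_mul_of_nonneg_right (Real.sqrt_le_sqrt intFB) (Real.sqrt_nonneg _)
        · exact mul_nonneg (Real.sqrt_nonneg _) (Real.sqrt_nonneg _)
        · exact Real.sqrt_nonneg _
    _ = Real.sqrt (2 * ((∫ z in S ×ˢ S, f z ^ 2) + ∫ z in S ×ˢ S, (pd1 f z) ^ 2))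
        * Real.sqrt (∫ z in S ×ˢ S, g z ^ 2)
        * Real.sqrt (2 * ((∫ z in S ×ˢ S, h z ^ 2) + ∫ z in S ×ˢ S, (pd2 h z) ^ 2)) := by
        ring

lemma contDiff_top_cast {E : Type*} [NormedAddCommGroup E] [NormedSpace ℝ E]
    {f : ℝ × ℝ → E} (h : ContDiff ℝ (⊤ : ℕ∞) f) : Differentiable ℝ f :=
  h.differentiable (by simp)

lemma IBP (a b : ℝ × ℝ → ℝ) (ha : ContDiff ℝ (⊤ : ℕ∞) a) (hb : ContDiff ℝ (⊤ : ℕ∞) b)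
    (hpa : PeriodicT a) (hpb : PeriodicT b) :
    ∫ z in S ×ˢ S, pd2 a z * b z = - ∫ z in S ×ˢ S, a z * pd2 b z := by
  have hc : ContDiff ℝ (⊤ : ℕ∞) (fun z => a z * b z) := ha.mul hb
  have hcd : Differentiable ℝ (fun z => a z * b z) := contDiff_top_cast hc
  have hc2 : Continuous (pd2 (fun z => a z * b z)) := (contDiff_pd2 _ hc).continuous
  have hline : ∀ x : ℝ, ∫ t in S, pd2 (fun z => a z * b z) (x, t) = 0 := by
    intro x
    have hftc : ∫ t in (0:ℝ)..tp, pd2 (fun z => a z * b z) (x, t)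
        = a (x, tp) * b (x, tp) - a (x, 0) * b (x, 0) := by
      have := intervalIntegral.integral_eq_sub_of_hasDerivAt
        (f := fun t => a (x, t) * b (x, t))
        (f' := fun t => pd2 (fun z => a z * b z) (x, t))
        (a := (0:ℝ)) (b := tp)
        (fun t _ => hasDerivAt_line2 _ hcd x t)
        ((cont_line2 _ hc2 x).intervalIntegrable 0 tp)
      exact this
    have hper : a (x, tp) * b (x, tp) = a (x, 0) * b (x, 0) := by
      have h1 := (hpa ((x, 0) : ℝ × ℝ)).2
      have h2 := (hpb ((x, 0) : ℝ × ℝ)).2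
      have e : (tp : ℝ) = 0 + 2 * Real.pi := by simp [tp]
      rw [e]
      exact congrArg₂ (· * ·) h1 h2
    have hSioc : ∫ t in S, pd2 (fun z => a z * b z) (x, t)
        = ∫ t in (0:ℝ)..tp, pd2 (fun z => a z * b z) (x, t) :=
      (intervalIntegral.integral_of_le tp_pos.le).symm
    rw [hSioc, hftc, hper]
    ring
  have hzero : ∫ z in S ×ˢ S, pd2 (fun z => a z * b z) z = 0 := by
    have e3 : ∫ x in S, (∫ y in S, pd2 (fun z => a z * b z) (x, y)) = ∫ x in S, (0:ℝ) :=
      setIntegral_congr_fun (by exact measurableSet_Ioc) (fun x _ => hline x)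
    rw [fubS1 _ hc2]
    rw [e3]
    simp
  have hsum : ∫ z in S ×ˢ S, pd2 (fun z => a z * b z) z
      = (∫ z in S ×ˢ S, pd2 a z * b z) + ∫ z in S ×ˢ S, a z * pd2 b z := by
    have e : ∀ z, pd2 (fun z => a z * b z) z = pd2 a z * b z + a z * pd2 b z :=
      fun z => pd2_mul a b (contDiff_top_cast ha) (contDiff_top_cast hb) z
    have e2 : ∫ z in S ×ˢ S, pd2 (fun z => a z * b z) z
        = ∫ z in S ×ˢ S, (pd2 a z * b z + a z * pd2 b z) :=
      setIntegral_congr_fun (by exact measurableSet_Ioc.prod measurableSet_Ioc)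
        (fun z _ => e z)
    rw [e2]
    exact integral_add
      (intOnQ _ (((contDiff_pd2 _ ha).continuous).mul hb.continuous))
      (intOnQ _ ((ha.continuous).mul (contDiff_pd2 _ hb).continuous))
  have := hsum.symm.trans hzero
  linarith [this]

lemma pdot_self_nonneg (p : ℝ × ℝ) : 0 ≤ pdot p p := by
  simp only [pdot]
  nlinarith [mul_self_nonneg p.1, mul_self_nonneg p.2]

lemma cont_pdot_self (u : ℝ × ℝ → ℝ × ℝ) (hu : Continuous u) :
    Continuous (fun z => pdot (u z) (u z)) := by
  simp only [pdot]
  exact ((continuous_fst.comp hu).mul (continuous_fst.comp hu)).add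
    ((continuous_snd.comp hu).mul (continuous_snd.comp hu))

lemma comp_fst_sq_le (u : ℝ × ℝ → ℝ × ℝ) (hu : Continuous u) :
    ∫ z in S ×ˢ S, ((u z).1) ^ 2 ≤ ∫ z in S ×ˢ S, pdot (u z) (u z) := by
  apply setIntegral_mono_on
  · exact intOnQ _ ((continuous_fst.comp hu).pow 2)
  · exact intOnQ _ (cont_pdot_self u hu)
  · exact measurableSet_Ioc.prod measurableSet_Ioc
  · intro z _
    simp only [pdot]
    nlinarith [mul_self_nonneg ((u z).2)]

lemma comp_snd_sq_le (u : ℝ × ℝ → ℝ × ℝ) (hu : Continuous u) :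
    ∫ z in S ×ˢ S, ((u z).2) ^ 2 ≤ ∫ z in S ×ˢ S, pdot (u z) (u z) := by
  apply setIntegral_mono_on
  · exact intOnQ _ ((continuous_snd.comp hu).pow 2)
  · exact intOnQ _ (cont_pdot_self u hu)
  · exact measurableSet_Ioc.prod measurableSet_Ioc
  · intro z _
    simp only [pdot]
    nlinarith [mul_self_nonneg ((u z).1)]

lemma TRIbound (f g h : ℝ × ℝ → ℝ) (hf : ContDiff ℝ (⊤ : ℕ∞) f) (hg : Continuous g)
    (hh : ContDiff ℝ (⊤ : ℕ∞) h) (hpf : PeriodicT f) (hph : PeriodicT h)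
    (A B C : ℝ) (hA : 0 ≤ A) (hB : 0 ≤ B) (hC : 0 ≤ C)
    (h1 : (∫ z in S ×ˢ S, f z ^ 2) + ∫ z in S ×ˢ S, (pd1 f z) ^ 2 ≤ A ^ 2)
    (h2 : ∫ z in S ×ˢ S, g z ^ 2 ≤ B ^ 2)
    (h3 : (∫ z in S ×ˢ S, h z ^ 2) + ∫ z in S ×ˢ S, (pd2 h z) ^ 2 ≤ C ^ 2) :
    |∫ z in S ×ˢ S, f z * g z * h z| ≤ 2 * (A * B * C) := by
  have t := TRI f g h hf hg hh hpf hph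
  have s1 : Real.sqrt (2 * ((∫ z in S ×ˢ S, f z ^ 2) + ∫ z in S ×ˢ S, (pd1 f z) ^ 2))
      ≤ Real.sqrt 2 * A := by
    have : (2:ℝ) * ((∫ z in S ×ˢ S, f z ^ 2) + ∫ z in S ×ˢ S, (pd1 f z) ^ 2)
        ≤ 2 * A ^ 2 := by linarith
    calc Real.sqrt (2 * ((∫ z in S ×ˢ S, f z ^ 2) + ∫ z in S ×ˢ S, (pd1 f z) ^ 2))
        ≤ Real.sqrt (2 * A ^ 2) := Real.sqrt_le_sqrt this
      _ = Real.sqrt 2 * A := by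
          rw [Real.sqrt_mul (by norm_num), Real.sqrt_sq hA]
  have s2 : Real.sqrt (∫ z in S ×ˢ S, g z ^ 2) ≤ B := by
    calc Real.sqrt (∫ z in S ×ˢ S, g z ^ 2) ≤ Real.sqrt (B ^ 2) := Real.sqrt_le_sqrt h2
      _ = B := Real.sqrt_sq hB
  have s3 : Real.sqrt (2 * ((∫ z in S ×ˢ S, h z ^ 2) + ∫ z in S ×ˢ S, (pd2 h z) ^ 2))
      ≤ Real.sqrt 2 * C := by
    have : (2:ℝ) * ((∫ z in S ×ˢ S, h z ^ 2) + ∫ z in S ×ˢ S, (pd2 h z) ^ 2)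
        ≤ 2 * C ^ 2 := by linarith
    calc Real.sqrt (2 * ((∫ z in S ×ˢ S, h z ^ 2) + ∫ z in S ×ˢ S, (pd2 h z) ^ 2))
        ≤ Real.sqrt (2 * C ^ 2) := Real.sqrt_le_sqrt this
      _ = Real.sqrt 2 * C := by
          rw [Real.sqrt_mul (by norm_num), Real.sqrt_sq hC]
  have e2 : Real.sqrt 2 * Real.sqrt 2 = 2 := Real.mul_self_sqrt (by norm_num)
  have hs2 : (0:ℝ) ≤ Real.sqrt 2 := Real.sqrt_nonneg 2
  calc |∫ z in S ×ˢ S, f z * g z * h z|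
      ≤ Real.sqrt (2 * ((∫ z in S ×ˢ S, f z ^ 2) + ∫ z in S ×ˢ S, (pd1 f z) ^ 2))
        * Real.sqrt (∫ z in S ×ˢ S, g z ^ 2)
        * Real.sqrt (2 * ((∫ z in S ×ˢ S, h z ^ 2) + ∫ z in S ×ˢ S, (pd2 h z) ^ 2)) := t
    _ ≤ (Real.sqrt 2 * A) * B * (Real.sqrt 2 * C) := by
        apply mul_le_mul
        · apply mul_le_mul s1 s2 (Real.sqrt_nonneg _)
          positivity
        · exact s3
        · exact Real.sqrt_nonneg _
        · positivity
    _ = 2 * (A * B * C) := by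
        rw [show (Real.sqrt 2 * A) * B * (Real.sqrt 2 * C)
          = (Real.sqrt 2 * Real.sqrt 2) * (A * B * C) by ring, e2]

lemma periodicT_fst {u : ℝ × ℝ → ℝ × ℝ} (h : PeriodicT u) : PeriodicT (fun z => (u z).1) :=
  fun x => ⟨congrArg Prod.fst (h x).1, congrArg Prod.fst (h x).2⟩
lemma periodicT_snd {u : ℝ × ℝ → ℝ × ℝ} (h : PeriodicT u) : PeriodicT (fun z => (u z).2) :=
  fun x => ⟨congrArg Prod.snd (h x).1, congrArg Prod.snd (h x).2⟩
lemma periodicT_sub {E : Type*} [NormedAddCommGroup E] [NormedSpace ℝ E]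
    {f g : ℝ × ℝ → E} (hf : PeriodicT f) (hg : PeriodicT g) :
    PeriodicT (fun z => f z - g z) :=
  fun x => ⟨by simp only []; rw [(hf x).1, (hg x).1], by simp only []; rw [(hf x).2, (hg x).2]⟩
lemma periodicT_mul {f g : ℝ × ℝ → ℝ} (hf : PeriodicT f) (hg : PeriodicT g) :
    PeriodicT (fun z => f z * g z) :=
  fun x => ⟨by simp only []; rw [(hf x).1, (hg x).1], by simp only []; rw [(hf x).2, (hg x).2]⟩


lemma L2T_sq (u : ℝ × ℝ → ℝ × ℝ) :
    L2T u ^ 2 = ∫ z in S ×ˢ S, pdot (u z) (u z) :=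
  Real.sq_sqrt (setIntegral_nonneg (measurableSet_Ioc.prod measurableSet_Ioc)
    (fun z _ => pdot_self_nonneg _))

lemma comp_bound_fst (U : ℝ × ℝ → ℝ × ℝ) (hU : Continuous U) (c : ℝ × ℝ → ℝ)
    (hc : ∀ z, c z = (U z).1) : ∫ z in S ×ˢ S, c z ^ 2 ≤ L2T U ^ 2 := by
  rw [L2T_sq]
  calc ∫ z in S ×ˢ S, c z ^ 2 = ∫ z in S ×ˢ S, ((U z).1) ^ 2 :=
        setIntegral_congr_fun (measurableSet_Ioc.prod measurableSet_Ioc)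
          (fun z _ => by rw [hc z])
    _ ≤ ∫ z in S ×ˢ S, pdot (U z) (U z) := comp_fst_sq_le U hU

lemma comp_bound_snd (U : ℝ × ℝ → ℝ × ℝ) (hU : Continuous U) (c : ℝ × ℝ → ℝ)
    (hc : ∀ z, c z = (U z).2) : ∫ z in S ×ˢ S, c z ^ 2 ≤ L2T U ^ 2 := by
  rw [L2T_sq]
  calc ∫ z in S ×ˢ S, c z ^ 2 = ∫ z in S ×ˢ S, ((U z).2) ^ 2 :=
        setIntegral_congr_fun (measurableSet_Ioc.prod measurableSet_Ioc)
          (fun z _ => by rw [hc z])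
    _ ≤ ∫ z in S ×ˢ S, pdot (U z) (U z) := comp_snd_sq_le U hU


lemma habs_sub (a b : ℝ) : |a - b| ≤ |a| + |b| := by
  rw [sub_eq_add_neg]
  exact (abs_add_le a (-b)).trans (by rw [abs_neg])

lemma abs_le_8 (a1 a2 a3 a4 a5 a6 a7 a8 : ℝ) :
    |a1 + a2 + a3 + a4 + a5 + a6 + a7 + a8|
      ≤ |a1| + |a2| + |a3| + |a4| + |a5| + |a6| + |a7| + |a8| := by
  have h1 := abs_add_le (a1 + a2 + a3 + a4 + a5 + a6 + a7) a8
  have h2 := abs_add_le (a1 + a2 + a3 + a4 + a5 + a6) a7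
  have h3 := abs_add_le (a1 + a2 + a3 + a4 + a5) a6
  have h4 := abs_add_le (a1 + a2 + a3 + a4) a5
  have h5 := abs_add_le (a1 + a2 + a3) a4
  have h6 := abs_add_le (a1 + a2) a3
  have h7 := abs_add_le a1 a2
  linarith

lemma final_combine (NA NB NC ND : ℝ) (hNA0 : 0 ≤ NA) (hNB0 : 0 ≤ NB)
    (hNC0 : 0 ≤ NC) (hND0 : 0 ≤ ND) :
    2 * (NA * NB * ND) + 2 * (NA * NB * ND) + 2 * (NC * NA * ND) + 2 * (NC * NA * ND)
        + (2 * (NB * NA * ND) + 2 * (ND * NB * NA)) + (2 * (NB * NA * ND) + 2 * (ND * NB * NA))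
        + (2 * (NA * NC * ND) + 2 * (ND * NA * NC)) + (2 * (NA * NC * ND) + 2 * (ND * NA * NC))
      ≤ 24 * NA * (NB + NC) * ND := by
  nlinarith [mul_nonneg (mul_nonneg hNA0 hNB0) hND0,
    mul_nonneg (mul_nonneg hNA0 hNC0) hND0]

set_option maxHeartbeats 4000000 in
/-- Estimate on the difference of two nonlinear terms on the torus:
`|∫ (φ·∇φ − ψ·∇ψ)·v| ≤ C ‖φ−ψ‖_{H^{1,0}} (‖φ‖_{H^{1,0}} + ‖ψ‖_{H^{1,0}}) ‖v‖_{H^{1,1}}`. -/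
theorem stmt13 :
    ∃ C > (0:ℝ), ∀ φ ψ v : ℝ × ℝ → ℝ × ℝ,
      ContDiff ℝ (⊤ : ℕ∞) φ → PeriodicT φ → DivFree φ →
      ContDiff ℝ (⊤ : ℕ∞) ψ → PeriodicT ψ → DivFree ψ →
      ContDiff ℝ (⊤ : ℕ∞) v → PeriodicT v → DivFree v →
      |∫ x in Q2, pdot (convV φ φ x - convV ψ ψ x) (v x)|
        ≤ C * Real.sqrt (H10sqT (fun x => φ x - ψ x))
            * (Real.sqrt (H10sqT φ) + Real.sqrt (H10sqT ψ))
            * Real.sqrt (H11sqT v) := by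
  refine ⟨24, by norm_num, ?_⟩
  intro φ ψ v hφ hpφ hdφ hψ hpψ hdψ hv hpv hdv
  have msQ : MeasurableSet (S ×ˢ S) := measurableSet_Ioc.prod measurableSet_Ioc
  have hφd : Differentiable ℝ φ := contDiff_top_cast hφ
  have hψd : Differentiable ℝ ψ := contDiff_top_cast hψ
  have hvd : Differentiable ℝ v := contDiff_top_cast hv
  set wv : ℝ × ℝ → ℝ × ℝ := fun x => φ x - ψ x with hwve
  have swv : ContDiff ℝ (⊤ : ℕ∞) wv := hφ.sub hψ
  have dwv : Differentiable ℝ wv := contDiff_top_cast swv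
  have pwv : PeriodicT wv := periodicT_sub hpφ hpψ
  set f1 : ℝ × ℝ → ℝ := fun z => (φ z).1 with hf1e
  set f2 : ℝ × ℝ → ℝ := fun z => (φ z).2 with hf2e
  set g1 : ℝ × ℝ → ℝ := fun z => (ψ z).1 with hg1e
  set g2 : ℝ × ℝ → ℝ := fun z => (ψ z).2 with hg2e
  set u1 : ℝ × ℝ → ℝ := fun z => (v z).1 with hu1e
  set u2 : ℝ × ℝ → ℝ := fun z => (v z).2 with hu2e
  set w1 : ℝ × ℝ → ℝ := fun z => f1 z - g1 z with hw1e
  set w2 : ℝ × ℝ → ℝ := fun z => f2 z - g2 z with hw2e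
  -- smoothness
  have sf1 : ContDiff ℝ (⊤ : ℕ∞) f1 := by rw [hf1e]; exact contDiff_fst.comp hφ
  have sf2 : ContDiff ℝ (⊤ : ℕ∞) f2 := by rw [hf2e]; exact contDiff_snd.comp hφ
  have sg1 : ContDiff ℝ (⊤ : ℕ∞) g1 := by rw [hg1e]; exact contDiff_fst.comp hψ
  have sg2 : ContDiff ℝ (⊤ : ℕ∞) g2 := by rw [hg2e]; exact contDiff_snd.comp hψ
  have su1 : ContDiff ℝ (⊤ : ℕ∞) u1 := by rw [hu1e]; exact contDiff_fst.comp hv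
  have su2 : ContDiff ℝ (⊤ : ℕ∞) u2 := by rw [hu2e]; exact contDiff_snd.comp hv
  have sw1 : ContDiff ℝ (⊤ : ℕ∞) w1 := by rw [hw1e]; exact sf1.sub sg1
  have sw2 : ContDiff ℝ (⊤ : ℕ∞) w2 := by rw [hw2e]; exact sf2.sub sg2
  have sd2u1 : ContDiff ℝ (⊤ : ℕ∞) (pd2 u1) := contDiff_pd2 u1 su1
  have sd2u2 : ContDiff ℝ (⊤ : ℕ∞) (pd2 u2) := contDiff_pd2 u2 su2
  have df1 : Differentiable ℝ f1 := contDiff_top_cast sf1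
  have df2 : Differentiable ℝ f2 := contDiff_top_cast sf2
  have dg1 : Differentiable ℝ g1 := contDiff_top_cast sg1
  have dg2 : Differentiable ℝ g2 := contDiff_top_cast sg2
  have du1 : Differentiable ℝ u1 := contDiff_top_cast su1
  have du2 : Differentiable ℝ u2 := contDiff_top_cast su2
  have dw1 : Differentiable ℝ w1 := contDiff_top_cast sw1
  have dw2 : Differentiable ℝ w2 := contDiff_top_cast sw2
  -- periodicity
  have pf1 : PeriodicT f1 := by rw [hf1e]; exact periodicT_fst hpφ
  have pf2 : PeriodicT f2 := by rw [hf2e]; exact periodicT_snd hpφ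
  have pg1 : PeriodicT g1 := by rw [hg1e]; exact periodicT_fst hpψ
  have pg2 : PeriodicT g2 := by rw [hg2e]; exact periodicT_snd hpψ
  have pu1 : PeriodicT u1 := by rw [hu1e]; exact periodicT_fst hpv
  have pu2 : PeriodicT u2 := by rw [hu2e]; exact periodicT_snd hpv
  have pw1 : PeriodicT w1 := by rw [hw1e]; exact periodicT_sub pf1 pg1
  have pw2 : PeriodicT w2 := by rw [hw2e]; exact periodicT_sub pf2 pg2
  have pd2u1 : PeriodicT (pd2 u1) := periodicT_pd2 u1 du1 pu1
  have pd2u2 : PeriodicT (pd2 u2) := periodicT_pd2 u2 du2 pu2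
  -- component identities
  have cf01 : ∀ z, f1 z = (φ z).1 := fun z => by simp only [hf1e]
  have cf02 : ∀ z, f2 z = (φ z).2 := fun z => by simp only [hf2e]
  have cg01 : ∀ z, g1 z = (ψ z).1 := fun z => by simp only [hg1e]
  have cg02 : ∀ z, g2 z = (ψ z).2 := fun z => by simp only [hg2e]
  have cu01 : ∀ z, u1 z = (v z).1 := fun z => by simp only [hu1e]
  have cu02 : ∀ z, u2 z = (v z).2 := fun z => by simp only [hu2e]
  have cw1 : ∀ z, w1 z = (wv z).1 := fun z => by
    simp only [hw1e, hf1e, hg1e, hwve, Prod.fst_sub]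
  have cw2 : ∀ z, w2 z = (wv z).2 := fun z => by
    simp only [hw2e, hf2e, hg2e, hwve, Prod.snd_sub]
  have cf11 : ∀ z, pd1 f1 z = (pd1 φ z).1 := by rw [hf1e]; exact fun z => pd1_fst φ hφd z
  have cf12 : ∀ z, pd1 f2 z = (pd1 φ z).2 := by rw [hf2e]; exact fun z => pd1_snd φ hφd z
  have cg11 : ∀ z, pd1 g1 z = (pd1 ψ z).1 := by rw [hg1e]; exact fun z => pd1_fst ψ hψd z
  have cg12 : ∀ z, pd1 g2 z = (pd1 ψ z).2 := by rw [hg2e]; exact fun z => pd1_snd ψ hψd z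
  have cv1 : ∀ z, pd2 u1 z = (pd2 v z).1 := by rw [hu1e]; exact fun z => pd2_fst v hvd z
  have cv2 : ∀ z, pd2 u2 z = (pd2 v z).2 := by rw [hu2e]; exact fun z => pd2_snd v hvd z
  have svd2 : ContDiff ℝ (⊤ : ℕ∞) (pd2 v) := contDiff_pd2 v hv
  have dvd2 : Differentiable ℝ (pd2 v) := contDiff_top_cast svd2
  have cvv1 : ∀ z, pd1 (pd2 u1) z = (pd1 (pd2 v) z).1 := by
    have e : pd2 u1 = fun z => (pd2 v z).1 := funext cv1
    rw [e]; exact fun z => pd1_fst (pd2 v) dvd2 z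
  have cvv2 : ∀ z, pd1 (pd2 u2) z = (pd1 (pd2 v) z).2 := by
    have e : pd2 u2 = fun z => (pd2 v z).2 := funext cv2
    rw [e]; exact fun z => pd1_snd (pd2 v) dvd2 z
  have cdw1 : ∀ z, pd1 w1 z = (pd1 wv z).1 := by
    have e : w1 = fun z => (wv z).1 := funext cw1
    rw [e]; exact fun z => pd1_fst wv dwv z
  have cdw2 : ∀ z, pd1 w2 z = (pd1 wv z).2 := by
    have e : w2 = fun z => (wv z).2 := funext cw2
    rw [e]; exact fun z => pd1_snd wv dwv z
  -- difference rules
  have dsub11 : ∀ z, pd1 w1 z = pd1 f1 z - pd1 g1 z := by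
    rw [hw1e]; exact fun z => pd1_sub f1 g1 df1 dg1 z
  have dsub12 : ∀ z, pd1 w2 z = pd1 f2 z - pd1 g2 z := by
    rw [hw2e]; exact fun z => pd1_sub f2 g2 df2 dg2 z
  have dsub21 : ∀ z, pd2 w1 z = pd2 f1 z - pd2 g1 z := by
    rw [hw1e]; exact fun z => pd2_sub f1 g1 df1 dg1 z
  have dsub22 : ∀ z, pd2 w2 z = pd2 f2 z - pd2 g2 z := by
    rw [hw2e]; exact fun z => pd2_sub f2 g2 df2 dg2 z
  -- divergence-free identities
  have hdivf : ∀ z, pd2 f2 z = - pd1 f1 z := by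
    intro z
    have h := hdφ z
    rw [hf2e, hf1e]
    linarith only [h]
  have hdivg : ∀ z, pd2 g2 z = - pd1 g1 z := by
    intro z
    have h := hdψ z
    rw [hg2e, hg1e]
    linarith only [h]
  have hdivw : ∀ z, pd2 w2 z = - pd1 w1 z := by
    intro z
    rw [dsub22 z, dsub11 z, hdivf z, hdivg z]
    ring
  -- norms
  set NA : ℝ := Real.sqrt (H10sqT wv) with hNAe
  set NB : ℝ := Real.sqrt (H10sqT φ) with hNBe
  set NC : ℝ := Real.sqrt (H10sqT ψ) with hNCe
  set ND : ℝ := Real.sqrt (H11sqT v) with hNDe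
  have hNA0 : 0 ≤ NA := Real.sqrt_nonneg _
  have hNB0 : 0 ≤ NB := Real.sqrt_nonneg _
  have hNC0 : 0 ≤ NC := Real.sqrt_nonneg _
  have hND0 : 0 ≤ ND := Real.sqrt_nonneg _
  have hNA2 : NA ^ 2 = L2T wv ^ 2 + L2T (pd1 wv) ^ 2 := by
    rw [hNAe]; exact Real.sq_sqrt (add_nonneg (sq_nonneg _) (sq_nonneg _))
  have hNB2 : NB ^ 2 = L2T φ ^ 2 + L2T (pd1 φ) ^ 2 := by
    rw [hNBe]; exact Real.sq_sqrt (add_nonneg (sq_nonneg _) (sq_nonneg _))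
  have hNC2 : NC ^ 2 = L2T ψ ^ 2 + L2T (pd1 ψ) ^ 2 := by
    rw [hNCe]; exact Real.sq_sqrt (add_nonneg (sq_nonneg _) (sq_nonneg _))
  have hND2 : ND ^ 2 = L2T v ^ 2 + L2T (pd1 v) ^ 2 + L2T (pd2 v) ^ 2
      + L2T (pd1 (pd2 v)) ^ 2 := by
    rw [hNDe]
    exact Real.sq_sqrt (add_nonneg (add_nonneg (add_nonneg (sq_nonneg _) (sq_nonneg _))
      (sq_nonneg _)) (sq_nonneg _))
  -- raw square bounds
  have sqw1 : ∫ z in S ×ˢ S, w1 z ^ 2 ≤ L2T wv ^ 2 := comp_bound_fst wv swv.continuous w1 cw1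
  have sqw2 : ∫ z in S ×ˢ S, w2 z ^ 2 ≤ L2T wv ^ 2 := comp_bound_snd wv swv.continuous w2 cw2
  have sqd1w1 : ∫ z in S ×ˢ S, (pd1 w1 z) ^ 2 ≤ L2T (pd1 wv) ^ 2 :=
    comp_bound_fst (pd1 wv) (contDiff_pd1 wv swv).continuous (pd1 w1) cdw1
  have sqd1w2 : ∫ z in S ×ˢ S, (pd1 w2 z) ^ 2 ≤ L2T (pd1 wv) ^ 2 :=
    comp_bound_snd (pd1 wv) (contDiff_pd1 wv swv).continuous (pd1 w2) cdw2
  have sqd2w2 : ∫ z in S ×ˢ S, (pd2 w2 z) ^ 2 ≤ L2T (pd1 wv) ^ 2 := by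
    have e : ∫ z in S ×ˢ S, (pd2 w2 z) ^ 2 = ∫ z in S ×ˢ S, (pd1 w1 z) ^ 2 :=
      setIntegral_congr_fun msQ (fun z _ => by rw [hdivw z]; ring)
    rw [e]; exact sqd1w1
  have sqf1 : ∫ z in S ×ˢ S, f1 z ^ 2 ≤ L2T φ ^ 2 := comp_bound_fst φ hφ.continuous f1 cf01
  have sqf2 : ∫ z in S ×ˢ S, f2 z ^ 2 ≤ L2T φ ^ 2 := comp_bound_snd φ hφ.continuous f2 cf02
  have sqg1 : ∫ z in S ×ˢ S, g1 z ^ 2 ≤ L2T ψ ^ 2 := comp_bound_fst ψ hψ.continuous g1 cg01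
  have sqg2 : ∫ z in S ×ˢ S, g2 z ^ 2 ≤ L2T ψ ^ 2 := comp_bound_snd ψ hψ.continuous g2 cg02
  have squ1 : ∫ z in S ×ˢ S, u1 z ^ 2 ≤ L2T v ^ 2 := comp_bound_fst v hv.continuous u1 cu01
  have squ2 : ∫ z in S ×ˢ S, u2 z ^ 2 ≤ L2T v ^ 2 := comp_bound_snd v hv.continuous u2 cu02
  have sqd1f1 : ∫ z in S ×ˢ S, (pd1 f1 z) ^ 2 ≤ L2T (pd1 φ) ^ 2 :=
    comp_bound_fst (pd1 φ) (contDiff_pd1 φ hφ).continuous (pd1 f1) cf11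
  have sqd1f2 : ∫ z in S ×ˢ S, (pd1 f2 z) ^ 2 ≤ L2T (pd1 φ) ^ 2 :=
    comp_bound_snd (pd1 φ) (contDiff_pd1 φ hφ).continuous (pd1 f2) cf12
  have sqd1g1 : ∫ z in S ×ˢ S, (pd1 g1 z) ^ 2 ≤ L2T (pd1 ψ) ^ 2 :=
    comp_bound_fst (pd1 ψ) (contDiff_pd1 ψ hψ).continuous (pd1 g1) cg11
  have sqd2g2 : ∫ z in S ×ˢ S, (pd2 g2 z) ^ 2 ≤ L2T (pd1 ψ) ^ 2 := by
    have e : ∫ z in S ×ˢ S, (pd2 g2 z) ^ 2 = ∫ z in S ×ˢ S, (pd1 g1 z) ^ 2 :=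
      setIntegral_congr_fun msQ (fun z _ => by rw [hdivg z]; ring)
    rw [e]; exact sqd1g1
  have sqd2u1 : ∫ z in S ×ˢ S, (pd2 u1 z) ^ 2 ≤ L2T (pd2 v) ^ 2 :=
    comp_bound_fst (pd2 v) svd2.continuous (pd2 u1) cv1
  have sqd2u2 : ∫ z in S ×ˢ S, (pd2 u2 z) ^ 2 ≤ L2T (pd2 v) ^ 2 :=
    comp_bound_snd (pd2 v) svd2.continuous (pd2 u2) cv2
  have sqd1d2u1 : ∫ z in S ×ˢ S, (pd1 (pd2 u1) z) ^ 2 ≤ L2T (pd1 (pd2 v)) ^ 2 :=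
    comp_bound_fst (pd1 (pd2 v)) (contDiff_pd1 (pd2 v) svd2).continuous (pd1 (pd2 u1)) cvv1
  have sqd1d2u2 : ∫ z in S ×ˢ S, (pd1 (pd2 u2) z) ^ 2 ≤ L2T (pd1 (pd2 v)) ^ 2 :=
    comp_bound_snd (pd1 (pd2 v)) (contDiff_pd1 (pd2 v) svd2).continuous (pd1 (pd2 u2)) cvv2
  -- combined bounds
  have bndW1 : (∫ z in S ×ˢ S, w1 z ^ 2) + ∫ z in S ×ˢ S, (pd1 w1 z) ^ 2 ≤ NA ^ 2 := by
    rw [hNA2]; exact add_le_add sqw1 sqd1w1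
  have bndW2f : (∫ z in S ×ˢ S, w2 z ^ 2) + ∫ z in S ×ˢ S, (pd1 w2 z) ^ 2 ≤ NA ^ 2 := by
    rw [hNA2]; exact add_le_add sqw2 sqd1w2
  have bndW2h : (∫ z in S ×ˢ S, w2 z ^ 2) + ∫ z in S ×ˢ S, (pd2 w2 z) ^ 2 ≤ NA ^ 2 := by
    rw [hNA2]; exact add_le_add sqw2 sqd2w2
  have bndF1 : (∫ z in S ×ˢ S, f1 z ^ 2) + ∫ z in S ×ˢ S, (pd1 f1 z) ^ 2 ≤ NB ^ 2 := by
    rw [hNB2]; exact add_le_add sqf1 sqd1f1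
  have bndF2 : (∫ z in S ×ˢ S, f2 z ^ 2) + ∫ z in S ×ˢ S, (pd1 f2 z) ^ 2 ≤ NB ^ 2 := by
    rw [hNB2]; exact add_le_add sqf2 sqd1f2
  have bndG1f : (∫ z in S ×ˢ S, g1 z ^ 2) + ∫ z in S ×ˢ S, (pd1 g1 z) ^ 2 ≤ NC ^ 2 := by
    rw [hNC2]; exact add_le_add sqg1 sqd1g1
  have bndG2h : (∫ z in S ×ˢ S, g2 z ^ 2) + ∫ z in S ×ˢ S, (pd2 g2 z) ^ 2 ≤ NC ^ 2 := by
    rw [hNC2]; exact add_le_add sqg2 sqd2g2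
  have bndU1 : (∫ z in S ×ˢ S, u1 z ^ 2) + ∫ z in S ×ˢ S, (pd2 u1 z) ^ 2 ≤ ND ^ 2 := by
    rw [hND2]; linarith only [squ1, sqd2u1, sq_nonneg (L2T (pd1 v)), sq_nonneg (L2T (pd1 (pd2 v)))]
  have bndU2 : (∫ z in S ×ˢ S, u2 z ^ 2) + ∫ z in S ×ˢ S, (pd2 u2 z) ^ 2 ≤ ND ^ 2 := by
    rw [hND2]; linarith only [squ2, sqd2u2, sq_nonneg (L2T (pd1 v)), sq_nonneg (L2T (pd1 (pd2 v)))]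
  have bndD2U1 : (∫ z in S ×ˢ S, (pd2 u1 z) ^ 2) + ∫ z in S ×ˢ S, (pd1 (pd2 u1) z) ^ 2 ≤ ND ^ 2 := by
    rw [hND2]; linarith only [sqd2u1, sqd1d2u1, sq_nonneg (L2T v), sq_nonneg (L2T (pd1 v))]
  have bndD2U2 : (∫ z in S ×ˢ S, (pd2 u2 z) ^ 2) + ∫ z in S ×ˢ S, (pd1 (pd2 u2) z) ^ 2 ≤ ND ^ 2 := by
    rw [hND2]; linarith only [sqd2u2, sqd1d2u2, sq_nonneg (L2T v), sq_nonneg (L2T (pd1 v))]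
  have nnsq : ∀ (c : ℝ × ℝ → ℝ), 0 ≤ ∫ z in S ×ˢ S, c z ^ 2 := fun c =>
    setIntegral_nonneg msQ (fun z _ => sq_nonneg _)
  have bndMidD1F1 : ∫ z in S ×ˢ S, (pd1 f1 z) ^ 2 ≤ NB ^ 2 := by
    linarith only [nnsq f1, bndF1]
  have bndMidD1F2 : ∫ z in S ×ˢ S, (pd1 f2 z) ^ 2 ≤ NB ^ 2 := by
    linarith only [nnsq f2, bndF2]
  have bndMidD1W1 : ∫ z in S ×ˢ S, (pd1 w1 z) ^ 2 ≤ NA ^ 2 := by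
    linarith only [nnsq w1, bndW1]
  have bndMidD1W2 : ∫ z in S ×ˢ S, (pd1 w2 z) ^ 2 ≤ NA ^ 2 := by
    linarith only [nnsq w2, bndW2f]
  have bndMidD1G1 : ∫ z in S ×ˢ S, (pd1 g1 z) ^ 2 ≤ NC ^ 2 := by
    linarith only [nnsq g1, bndG1f]
  have bndMidF1 : ∫ z in S ×ˢ S, f1 z ^ 2 ≤ NB ^ 2 := by
    linarith only [nnsq (pd1 f1), bndF1]
  have bndMidF2 : ∫ z in S ×ˢ S, f2 z ^ 2 ≤ NB ^ 2 := by
    linarith only [nnsq (pd1 f2), bndF2]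
  have bndMidW1 : ∫ z in S ×ˢ S, w1 z ^ 2 ≤ NA ^ 2 := by
    linarith only [nnsq (pd1 w1), bndW1]
  have bndMidW2 : ∫ z in S ×ˢ S, w2 z ^ 2 ≤ NA ^ 2 := by
    linarith only [nnsq (pd1 w2), bndW2f]
  -- continuity of derivative scalars
  have cpd1f1 : Continuous (pd1 f1) := (contDiff_pd1 f1 sf1).continuous
  have cpd1f2 : Continuous (pd1 f2) := (contDiff_pd1 f2 sf2).continuous
  have cpd1g1 : Continuous (pd1 g1) := (contDiff_pd1 g1 sg1).continuous
  have cpd1w1 : Continuous (pd1 w1) := (contDiff_pd1 w1 sw1).continuous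
  have cpd1w2 : Continuous (pd1 w2) := (contDiff_pd1 w2 sw2).continuous
  have cpd2f1 : Continuous (pd2 f1) := (contDiff_pd2 f1 sf1).continuous
  have cpd2f2 : Continuous (pd2 f2) := (contDiff_pd2 f2 sf2).continuous
  have cpd2w1 : Continuous (pd2 w1) := (contDiff_pd2 w1 sw1).continuous
  have cpd2w2 : Continuous (pd2 w2) := (contDiff_pd2 w2 sw2).continuous
  have cpd2u1 : Continuous (pd2 u1) := sd2u1.continuous
  have cpd2u2 : Continuous (pd2 u2) := sd2u2.continuous
  -- the pointwise identity
  have hIdent : ∀ x, pdot (convV φ φ x - convV ψ ψ x) (v x)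
      = w1 x * pd1 f1 x * u1 x + w1 x * pd1 f2 x * u2 x + g1 x * pd1 w1 x * u1 x + g1 x * pd1 w2 x * u2 x + w2 x * pd2 f1 x * u1 x + w2 x * pd2 f2 x * u2 x + g2 x * pd2 w1 x * u1 x + g2 x * pd2 w2 x * u2 x := by
    intro x
    rw [dsub11 x, dsub12 x, dsub21 x, dsub22 x]
    simp only [hw1e, hw2e, hf1e, hf2e, hg1e, hg2e, hu1e, hu2e, convV, pdot,
      Prod.fst_sub, Prod.snd_sub, Prod.fst_add, Prod.snd_add, Prod.smul_fst, Prod.smul_snd,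
      smul_eq_mul, pd1_fst φ hφd, pd1_snd φ hφd, pd2_fst φ hφd, pd2_snd φ hφd,
      pd1_fst ψ hψd, pd1_snd ψ hψd, pd2_fst ψ hψd, pd2_snd ψ hψd]
    ring
  have iT1 : IntegrableOn (fun z => w1 z * pd1 f1 z * u1 z) (S ×ˢ S) := intOnQ _ ((sw1.continuous.mul cpd1f1).mul su1.continuous)
  have iT2 : IntegrableOn (fun z => w1 z * pd1 f2 z * u2 z) (S ×ˢ S) := intOnQ _ ((sw1.continuous.mul cpd1f2).mul su2.continuous)
  have iT3 : IntegrableOn (fun z => g1 z * pd1 w1 z * u1 z) (S ×ˢ S) := intOnQ _ ((sg1.continuous.mul cpd1w1).mul su1.continuous)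
  have iT4 : IntegrableOn (fun z => g1 z * pd1 w2 z * u2 z) (S ×ˢ S) := intOnQ _ ((sg1.continuous.mul cpd1w2).mul su2.continuous)
  have iT5 : IntegrableOn (fun z => w2 z * pd2 f1 z * u1 z) (S ×ˢ S) := intOnQ _ ((sw2.continuous.mul cpd2f1).mul su1.continuous)
  have iT6 : IntegrableOn (fun z => w2 z * pd2 f2 z * u2 z) (S ×ˢ S) := intOnQ _ ((sw2.continuous.mul cpd2f2).mul su2.continuous)
  have iT7 : IntegrableOn (fun z => g2 z * pd2 w1 z * u1 z) (S ×ˢ S) := intOnQ _ ((sg2.continuous.mul cpd2w1).mul su1.continuous)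
  have iT8 : IntegrableOn (fun z => g2 z * pd2 w2 z * u2 z) (S ×ˢ S) := intOnQ _ ((sg2.continuous.mul cpd2w2).mul su2.continuous)
  have isum2 : IntegrableOn (fun z => w1 z * pd1 f1 z * u1 z + w1 z * pd1 f2 z * u2 z) (S ×ˢ S) := iT1.add iT2
  have isum3 : IntegrableOn (fun z => w1 z * pd1 f1 z * u1 z + w1 z * pd1 f2 z * u2 z + g1 z * pd1 w1 z * u1 z) (S ×ˢ S) := isum2.add iT3
  have isum4 : IntegrableOn (fun z => w1 z * pd1 f1 z * u1 z + w1 z * pd1 f2 z * u2 z + g1 z * pd1 w1 z * u1 z + g1 z * pd1 w2 z * u2 z) (S ×ˢ S) := isum3.add iT4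
  have isum5 : IntegrableOn (fun z => w1 z * pd1 f1 z * u1 z + w1 z * pd1 f2 z * u2 z + g1 z * pd1 w1 z * u1 z + g1 z * pd1 w2 z * u2 z + w2 z * pd2 f1 z * u1 z) (S ×ˢ S) := isum4.add iT5
  have isum6 : IntegrableOn (fun z => w1 z * pd1 f1 z * u1 z + w1 z * pd1 f2 z * u2 z + g1 z * pd1 w1 z * u1 z + g1 z * pd1 w2 z * u2 z + w2 z * pd2 f1 z * u1 z + w2 z * pd2 f2 z * u2 z) (S ×ˢ S) := isum5.add iT6
  have isum7 : IntegrableOn (fun z => w1 z * pd1 f1 z * u1 z + w1 z * pd1 f2 z * u2 z + g1 z * pd1 w1 z * u1 z + g1 z * pd1 w2 z * u2 z + w2 z * pd2 f1 z * u1 z + w2 z * pd2 f2 z * u2 z + g2 z * pd2 w1 z * u1 z) (S ×ˢ S) := isum6.add iT7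
  have split8 : (∫ z in S ×ˢ S, (w1 z * pd1 f1 z * u1 z + w1 z * pd1 f2 z * u2 z + g1 z * pd1 w1 z * u1 z + g1 z * pd1 w2 z * u2 z + w2 z * pd2 f1 z * u1 z + w2 z * pd2 f2 z * u2 z + g2 z * pd2 w1 z * u1 z + g2 z * pd2 w2 z * u2 z))
      = (∫ z in S ×ˢ S, (w1 z * pd1 f1 z * u1 z + w1 z * pd1 f2 z * u2 z + g1 z * pd1 w1 z * u1 z + g1 z * pd1 w2 z * u2 z + w2 z * pd2 f1 z * u1 z + w2 z * pd2 f2 z * u2 z + g2 z * pd2 w1 z * u1 z)) + ∫ z in S ×ˢ S, g2 z * pd2 w2 z * u2 z :=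
    integral_add isum7 iT8
  have split7 : (∫ z in S ×ˢ S, (w1 z * pd1 f1 z * u1 z + w1 z * pd1 f2 z * u2 z + g1 z * pd1 w1 z * u1 z + g1 z * pd1 w2 z * u2 z + w2 z * pd2 f1 z * u1 z + w2 z * pd2 f2 z * u2 z + g2 z * pd2 w1 z * u1 z))
      = (∫ z in S ×ˢ S, (w1 z * pd1 f1 z * u1 z + w1 z * pd1 f2 z * u2 z + g1 z * pd1 w1 z * u1 z + g1 z * pd1 w2 z * u2 z + w2 z * pd2 f1 z * u1 z + w2 z * pd2 f2 z * u2 z)) + ∫ z in S ×ˢ S, g2 z * pd2 w1 z * u1 z :=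
    integral_add isum6 iT7
  have split6 : (∫ z in S ×ˢ S, (w1 z * pd1 f1 z * u1 z + w1 z * pd1 f2 z * u2 z + g1 z * pd1 w1 z * u1 z + g1 z * pd1 w2 z * u2 z + w2 z * pd2 f1 z * u1 z + w2 z * pd2 f2 z * u2 z))
      = (∫ z in S ×ˢ S, (w1 z * pd1 f1 z * u1 z + w1 z * pd1 f2 z * u2 z + g1 z * pd1 w1 z * u1 z + g1 z * pd1 w2 z * u2 z + w2 z * pd2 f1 z * u1 z)) + ∫ z in S ×ˢ S, w2 z * pd2 f2 z * u2 z :=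
    integral_add isum5 iT6
  have split5 : (∫ z in S ×ˢ S, (w1 z * pd1 f1 z * u1 z + w1 z * pd1 f2 z * u2 z + g1 z * pd1 w1 z * u1 z + g1 z * pd1 w2 z * u2 z + w2 z * pd2 f1 z * u1 z))
      = (∫ z in S ×ˢ S, (w1 z * pd1 f1 z * u1 z + w1 z * pd1 f2 z * u2 z + g1 z * pd1 w1 z * u1 z + g1 z * pd1 w2 z * u2 z)) + ∫ z in S ×ˢ S, w2 z * pd2 f1 z * u1 z :=
    integral_add isum4 iT5
  have split4 : (∫ z in S ×ˢ S, (w1 z * pd1 f1 z * u1 z + w1 z * pd1 f2 z * u2 z + g1 z * pd1 w1 z * u1 z + g1 z * pd1 w2 z * u2 z))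
      = (∫ z in S ×ˢ S, (w1 z * pd1 f1 z * u1 z + w1 z * pd1 f2 z * u2 z + g1 z * pd1 w1 z * u1 z)) + ∫ z in S ×ˢ S, g1 z * pd1 w2 z * u2 z :=
    integral_add isum3 iT4
  have split3 : (∫ z in S ×ˢ S, (w1 z * pd1 f1 z * u1 z + w1 z * pd1 f2 z * u2 z + g1 z * pd1 w1 z * u1 z))
      = (∫ z in S ×ˢ S, (w1 z * pd1 f1 z * u1 z + w1 z * pd1 f2 z * u2 z)) + ∫ z in S ×ˢ S, g1 z * pd1 w1 z * u1 z :=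
    integral_add isum2 iT3
  have split2 : (∫ z in S ×ˢ S, (w1 z * pd1 f1 z * u1 z + w1 z * pd1 f2 z * u2 z))
      = (∫ z in S ×ˢ S, (w1 z * pd1 f1 z * u1 z)) + ∫ z in S ×ˢ S, w1 z * pd1 f2 z * u2 z :=
    integral_add iT1 iT2
  have hIeq : (∫ x in Q2, pdot (convV φ φ x - convV ψ ψ x) (v x))
      = ∫ z in S ×ˢ S, (w1 z * pd1 f1 z * u1 z + w1 z * pd1 f2 z * u2 z + g1 z * pd1 w1 z * u1 z + g1 z * pd1 w2 z * u2 z + w2 z * pd2 f1 z * u1 z + w2 z * pd2 f2 z * u2 z + g2 z * pd2 w1 z * u1 z + g2 z * pd2 w2 z * u2 z) :=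
    setIntegral_congr_fun msQ (fun x _ => hIdent x)
  have hIeq2 : (∫ x in Q2, pdot (convV φ φ x - convV ψ ψ x) (v x))
      = (∫ z in S ×ˢ S, w1 z * pd1 f1 z * u1 z) + (∫ z in S ×ˢ S, w1 z * pd1 f2 z * u2 z) + (∫ z in S ×ˢ S, g1 z * pd1 w1 z * u1 z) + (∫ z in S ×ˢ S, g1 z * pd1 w2 z * u2 z) + (∫ z in S ×ˢ S, w2 z * pd2 f1 z * u1 z) + (∫ z in S ×ˢ S, w2 z * pd2 f2 z * u2 z) + (∫ z in S ×ˢ S, g2 z * pd2 w1 z * u1 z) + (∫ z in S ×ˢ S, g2 z * pd2 w2 z * u2 z) := by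
    rw [hIeq, split8, split7, split6, split5, split4, split3, split2]
  have hsplit5 : (∫ z in S ×ˢ S, w2 z * pd2 f1 z * u1 z)
      = (∫ z in S ×ˢ S, f1 z * pd1 w1 z * u1 z) - ∫ z in S ×ˢ S, pd2 u1 z * f1 z * w2 z := by
    have e1 : (∫ z in S ×ˢ S, w2 z * pd2 f1 z * u1 z) = ∫ z in S ×ˢ S, pd2 f1 z * (w2 z * u1 z) :=
      setIntegral_congr_fun msQ (fun z _ => by ring)
    have e2 : (∫ z in S ×ˢ S, pd2 f1 z * (w2 z * u1 z))
        = - ∫ z in S ×ˢ S, f1 z * pd2 (fun z => w2 z * u1 z) z :=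
      IBP f1 (fun z => w2 z * u1 z) sf1 (sw2.mul su1) pf1 (periodicT_mul pw2 pu1)
    have e3 : (- ∫ z in S ×ˢ S, f1 z * pd2 (fun z => w2 z * u1 z) z)
        = ∫ z in S ×ˢ S, (f1 z * pd1 w1 z * u1 z - pd2 u1 z * f1 z * w2 z) := by
      rw [← integral_neg]
      apply setIntegral_congr_fun msQ
      intro z _
      simp only []
      rw [pd2_mul w2 u1 dw2 du1 z, hdivw z]
      ring
    have e4 : (∫ z in S ×ˢ S, (f1 z * pd1 w1 z * u1 z - pd2 u1 z * f1 z * w2 z))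
        = (∫ z in S ×ˢ S, f1 z * pd1 w1 z * u1 z) - ∫ z in S ×ˢ S, pd2 u1 z * f1 z * w2 z :=
      integral_sub (intOnQ _ ((sf1.continuous.mul cpd1w1).mul su1.continuous)) (intOnQ _ ((cpd2u1.mul sf1.continuous).mul sw2.continuous))
    rw [e1, e2, e3, e4]
  have hsplit6 : (∫ z in S ×ˢ S, w2 z * pd2 f2 z * u2 z)
      = (∫ z in S ×ˢ S, f2 z * pd1 w1 z * u2 z) - ∫ z in S ×ˢ S, pd2 u2 z * f2 z * w2 z := by
    have e1 : (∫ z in S ×ˢ S, w2 z * pd2 f2 z * u2 z) = ∫ z in S ×ˢ S, pd2 f2 z * (w2 z * u2 z) :=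
      setIntegral_congr_fun msQ (fun z _ => by ring)
    have e2 : (∫ z in S ×ˢ S, pd2 f2 z * (w2 z * u2 z))
        = - ∫ z in S ×ˢ S, f2 z * pd2 (fun z => w2 z * u2 z) z :=
      IBP f2 (fun z => w2 z * u2 z) sf2 (sw2.mul su2) pf2 (periodicT_mul pw2 pu2)
    have e3 : (- ∫ z in S ×ˢ S, f2 z * pd2 (fun z => w2 z * u2 z) z)
        = ∫ z in S ×ˢ S, (f2 z * pd1 w1 z * u2 z - pd2 u2 z * f2 z * w2 z) := by
      rw [← integral_neg]
      apply setIntegral_congr_fun msQ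
      intro z _
      simp only []
      rw [pd2_mul w2 u2 dw2 du2 z, hdivw z]
      ring
    have e4 : (∫ z in S ×ˢ S, (f2 z * pd1 w1 z * u2 z - pd2 u2 z * f2 z * w2 z))
        = (∫ z in S ×ˢ S, f2 z * pd1 w1 z * u2 z) - ∫ z in S ×ˢ S, pd2 u2 z * f2 z * w2 z :=
      integral_sub (intOnQ _ ((sf2.continuous.mul cpd1w1).mul su2.continuous)) (intOnQ _ ((cpd2u2.mul sf2.continuous).mul sw2.continuous))
    rw [e1, e2, e3, e4]
  have hsplit7 : (∫ z in S ×ˢ S, g2 z * pd2 w1 z * u1 z)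
      = (∫ z in S ×ˢ S, w1 z * pd1 g1 z * u1 z) - ∫ z in S ×ˢ S, pd2 u1 z * w1 z * g2 z := by
    have e1 : (∫ z in S ×ˢ S, g2 z * pd2 w1 z * u1 z) = ∫ z in S ×ˢ S, pd2 w1 z * (g2 z * u1 z) :=
      setIntegral_congr_fun msQ (fun z _ => by ring)
    have e2 : (∫ z in S ×ˢ S, pd2 w1 z * (g2 z * u1 z))
        = - ∫ z in S ×ˢ S, w1 z * pd2 (fun z => g2 z * u1 z) z :=
      IBP w1 (fun z => g2 z * u1 z) sw1 (sg2.mul su1) pw1 (periodicT_mul pg2 pu1)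
    have e3 : (- ∫ z in S ×ˢ S, w1 z * pd2 (fun z => g2 z * u1 z) z)
        = ∫ z in S ×ˢ S, (w1 z * pd1 g1 z * u1 z - pd2 u1 z * w1 z * g2 z) := by
      rw [← integral_neg]
      apply setIntegral_congr_fun msQ
      intro z _
      simp only []
      rw [pd2_mul g2 u1 dg2 du1 z, hdivg z]
      ring
    have e4 : (∫ z in S ×ˢ S, (w1 z * pd1 g1 z * u1 z - pd2 u1 z * w1 z * g2 z))
        = (∫ z in S ×ˢ S, w1 z * pd1 g1 z * u1 z) - ∫ z in S ×ˢ S, pd2 u1 z * w1 z * g2 z :=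
      integral_sub (intOnQ _ ((sw1.continuous.mul cpd1g1).mul su1.continuous)) (intOnQ _ ((cpd2u1.mul sw1.continuous).mul sg2.continuous))
    rw [e1, e2, e3, e4]
  have hsplit8 : (∫ z in S ×ˢ S, g2 z * pd2 w2 z * u2 z)
      = (∫ z in S ×ˢ S, w2 z * pd1 g1 z * u2 z) - ∫ z in S ×ˢ S, pd2 u2 z * w2 z * g2 z := by
    have e1 : (∫ z in S ×ˢ S, g2 z * pd2 w2 z * u2 z) = ∫ z in S ×ˢ S, pd2 w2 z * (g2 z * u2 z) :=
      setIntegral_congr_fun msQ (fun z _ => by ring)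
    have e2 : (∫ z in S ×ˢ S, pd2 w2 z * (g2 z * u2 z))
        = - ∫ z in S ×ˢ S, w2 z * pd2 (fun z => g2 z * u2 z) z :=
      IBP w2 (fun z => g2 z * u2 z) sw2 (sg2.mul su2) pw2 (periodicT_mul pg2 pu2)
    have e3 : (- ∫ z in S ×ˢ S, w2 z * pd2 (fun z => g2 z * u2 z) z)
        = ∫ z in S ×ˢ S, (w2 z * pd1 g1 z * u2 z - pd2 u2 z * w2 z * g2 z) := by
      rw [← integral_neg]
      apply setIntegral_congr_fun msQ
      intro z _
      simp only []
      rw [pd2_mul g2 u2 dg2 du2 z, hdivg z]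
      ring
    have e4 : (∫ z in S ×ˢ S, (w2 z * pd1 g1 z * u2 z - pd2 u2 z * w2 z * g2 z))
        = (∫ z in S ×ˢ S, w2 z * pd1 g1 z * u2 z) - ∫ z in S ×ˢ S, pd2 u2 z * w2 z * g2 z :=
      integral_sub (intOnQ _ ((sw2.continuous.mul cpd1g1).mul su2.continuous)) (intOnQ _ ((cpd2u2.mul sw2.continuous).mul sg2.continuous))
    rw [e1, e2, e3, e4]
  have B1 : |∫ z in S ×ˢ S, w1 z * pd1 f1 z * u1 z| ≤ 2 * (NA * NB * ND) :=
    TRIbound w1 (pd1 f1) u1 sw1 cpd1f1 su1 pw1 pu1 NA NB ND hNA0 hNB0 hND0 bndW1 bndMidD1F1 bndU1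
  have B2 : |∫ z in S ×ˢ S, w1 z * pd1 f2 z * u2 z| ≤ 2 * (NA * NB * ND) :=
    TRIbound w1 (pd1 f2) u2 sw1 cpd1f2 su2 pw1 pu2 NA NB ND hNA0 hNB0 hND0 bndW1 bndMidD1F2 bndU2
  have B3 : |∫ z in S ×ˢ S, g1 z * pd1 w1 z * u1 z| ≤ 2 * (NC * NA * ND) :=
    TRIbound g1 (pd1 w1) u1 sg1 cpd1w1 su1 pg1 pu1 NC NA ND hNC0 hNA0 hND0 bndG1f bndMidD1W1 bndU1
  have B4 : |∫ z in S ×ˢ S, g1 z * pd1 w2 z * u2 z| ≤ 2 * (NC * NA * ND) :=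
    TRIbound g1 (pd1 w2) u2 sg1 cpd1w2 su2 pg1 pu2 NC NA ND hNC0 hNA0 hND0 bndG1f bndMidD1W2 bndU2
  have B5a : |∫ z in S ×ˢ S, f1 z * pd1 w1 z * u1 z| ≤ 2 * (NB * NA * ND) :=
    TRIbound f1 (pd1 w1) u1 sf1 cpd1w1 su1 pf1 pu1 NB NA ND hNB0 hNA0 hND0 bndF1 bndMidD1W1 bndU1
  have B5b : |∫ z in S ×ˢ S, pd2 u1 z * f1 z * w2 z| ≤ 2 * (ND * NB * NA) :=
    TRIbound (pd2 u1) f1 w2 sd2u1 sf1.continuous sw2 pd2u1 pw2 ND NB NA hND0 hNB0 hNA0 bndD2U1 bndMidF1 bndW2h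
  have B6a : |∫ z in S ×ˢ S, f2 z * pd1 w1 z * u2 z| ≤ 2 * (NB * NA * ND) :=
    TRIbound f2 (pd1 w1) u2 sf2 cpd1w1 su2 pf2 pu2 NB NA ND hNB0 hNA0 hND0 bndF2 bndMidD1W1 bndU2
  have B6b : |∫ z in S ×ˢ S, pd2 u2 z * f2 z * w2 z| ≤ 2 * (ND * NB * NA) :=
    TRIbound (pd2 u2) f2 w2 sd2u2 sf2.continuous sw2 pd2u2 pw2 ND NB NA hND0 hNB0 hNA0 bndD2U2 bndMidF2 bndW2h
  have B7a : |∫ z in S ×ˢ S, w1 z * pd1 g1 z * u1 z| ≤ 2 * (NA * NC * ND) :=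
    TRIbound w1 (pd1 g1) u1 sw1 cpd1g1 su1 pw1 pu1 NA NC ND hNA0 hNC0 hND0 bndW1 bndMidD1G1 bndU1
  have B7b : |∫ z in S ×ˢ S, pd2 u1 z * w1 z * g2 z| ≤ 2 * (ND * NA * NC) :=
    TRIbound (pd2 u1) w1 g2 sd2u1 sw1.continuous sg2 pd2u1 pg2 ND NA NC hND0 hNA0 hNC0 bndD2U1 bndMidW1 bndG2h
  have B8a : |∫ z in S ×ˢ S, w2 z * pd1 g1 z * u2 z| ≤ 2 * (NA * NC * ND) :=
    TRIbound w2 (pd1 g1) u2 sw2 cpd1g1 su2 pw2 pu2 NA NC ND hNA0 hNC0 hND0 bndW2f bndMidD1G1 bndU2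
  have B8b : |∫ z in S ×ˢ S, pd2 u2 z * w2 z * g2 z| ≤ 2 * (ND * NA * NC) :=
    TRIbound (pd2 u2) w2 g2 sd2u2 sw2.continuous sg2 pd2u2 pg2 ND NA NC hND0 hNA0 hNC0 bndD2U2 bndMidW2 bndG2h
  have B5 : |∫ z in S ×ˢ S, w2 z * pd2 f1 z * u1 z| ≤ 2 * (NB * NA * ND) + 2 * (ND * NB * NA) := by
    rw [hsplit5]
    exact (habs_sub _ _).trans (add_le_add B5a B5b)
  have B6 : |∫ z in S ×ˢ S, w2 z * pd2 f2 z * u2 z| ≤ 2 * (NB * NA * ND) + 2 * (ND * NB * NA) := by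
    rw [hsplit6]
    exact (habs_sub _ _).trans (add_le_add B6a B6b)
  have B7 : |∫ z in S ×ˢ S, g2 z * pd2 w1 z * u1 z| ≤ 2 * (NA * NC * ND) + 2 * (ND * NA * NC) := by
    rw [hsplit7]
    exact (habs_sub _ _).trans (add_le_add B7a B7b)
  have B8 : |∫ z in S ×ˢ S, g2 z * pd2 w2 z * u2 z| ≤ 2 * (NA * NC * ND) + 2 * (ND * NA * NC) := by
    rw [hsplit8]
    exact (habs_sub _ _).trans (add_le_add B8a B8b)
  calc |∫ x in Q2, pdot (convV φ φ x - convV ψ ψ x) (v x)|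
      = |(∫ z in S ×ˢ S, w1 z * pd1 f1 z * u1 z) + (∫ z in S ×ˢ S, w1 z * pd1 f2 z * u2 z) + (∫ z in S ×ˢ S, g1 z * pd1 w1 z * u1 z) + (∫ z in S ×ˢ S, g1 z * pd1 w2 z * u2 z) + (∫ z in S ×ˢ S, w2 z * pd2 f1 z * u1 z) + (∫ z in S ×ˢ S, w2 z * pd2 f2 z * u2 z) + (∫ z in S ×ˢ S, g2 z * pd2 w1 z * u1 z) + (∫ z in S ×ˢ S, g2 z * pd2 w2 z * u2 z)| := by rw [hIeq2]
    _ ≤ |(∫ z in S ×ˢ S, w1 z * pd1 f1 z * u1 z)| + |(∫ z in S ×ˢ S, w1 z * pd1 f2 z * u2 z)| + |(∫ z in S ×ˢ S, g1 z * pd1 w1 z * u1 z)| + |(∫ z in S ×ˢ S, g1 z * pd1 w2 z * u2 z)| + |(∫ z in S ×ˢ S, w2 z * pd2 f1 z * u1 z)| + |(∫ z in S ×ˢ S, w2 z * pd2 f2 z * u2 z)| + |(∫ z in S ×ˢ S, g2 z * pd2 w1 z * u1 z)| + |(∫ z in S ×ˢ S, g2 z * pd2 w2 z * u2 z)| :=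
        abs_le_8 _ _ _ _ _ _ _ _
    _ ≤ 2 * (NA * NB * ND) + 2 * (NA * NB * ND) + 2 * (NC * NA * ND) + 2 * (NC * NA * ND)
        + (2 * (NB * NA * ND) + 2 * (ND * NB * NA)) + (2 * (NB * NA * ND) + 2 * (ND * NB * NA))
        + (2 * (NA * NC * ND) + 2 * (ND * NA * NC)) + (2 * (NA * NC * ND) + 2 * (ND * NA * NC)) := by
        refine add_le_add (add_le_add (add_le_add (add_le_add (add_le_add (add_le_add
          (add_le_add B1 B2) B3) B4) B5) B6) B7) B8
    _ ≤ 24 * NA * (NB + NC) * ND := final_combine NA NB NC ND hNA0 hNB0 hNC0 hND0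
end
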